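/- arXiv:1607.02286 — 3 statements merged into one kernel-verified Lean document; each statement's English description precedes it below -/
import Mathlib

section
/- Let w ∈ W. If w = w₁st for some w₁ ∈ W with ℓ(w) = ℓ(w₁) + 2 and R(w₁s) = {s}, then r ∉ R(w); and if w = w₁sr for some w₁ ∈ W with ℓ(w) = ℓ(w₁) + 2 and R(w₁s) = {s}, then t ∉ R(w). -/
noncomputable section

open CoxeterSystem

namespace Stmt7Aux

/-! ### Generic group lemmas -/

section GroupLemmas

variable {G : Type*} [Group G] {a b : G}

lemma sandwich (hb : b * b = 1) (x y : G) : (b * x * b = y) ↔ (x = b * y * b) := by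
  constructor
  · intro h
    rw [← h]
    simp only [← mul_assoc]
    rw [hb, one_mul, mul_assoc, hb, mul_one]
  · intro h
    rw [h]
    simp only [← mul_assoc]
    rw [hb, one_mul, mul_assoc, hb, mul_one]

lemma conj_cancel (ha : a * a = 1) (hb : b * b = 1) (x : G) :
    (b * a) * ((a * b) * x * (b * a)) * (a * b) = x := by
  have h1 : (b * a) * (a * b) = 1 := by
    rw [mul_assoc, ← mul_assoc a a b, ha, one_mul, hb]
  calc (b * a) * ((a * b) * x * (b * a)) * (a * b)
      = ((b * a) * (a * b)) * x * ((b * a) * (a * b)) := by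
        simp only [mul_assoc]
    _ = x := by rw [h1, one_mul, mul_one]

lemma shift_eq (n : ℕ) :
    (b * a) * ((b * a) ^ n * b) * (a * b) = (b * a) ^ (2 + n) * b := by
  have h1 : (2 + n) = (n + 1) + 1 := by omega
  rw [h1]
  calc (b * a) * ((b * a) ^ n * b) * (a * b)
      = ((b * a) * (b * a) ^ n) * (b * (a * b)) := by simp only [mul_assoc]
    _ = (b * a) ^ (n + 1) * ((b * a) * b) := by
        rw [← pow_succ', show b * (a * b) = (b * a) * b from (mul_assoc b a b).symm]
    _ = (b * a) ^ ((n + 1) + 1) * b := by rw [← mul_assoc, ← pow_succ]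

lemma shift_iff (ha : a * a = 1) (hb : b * b = 1) (n : ℕ) (w : G) :
    ((a * b) * w * (b * a) = (b * a) ^ n * b) ↔ (w = (b * a) ^ (2 + n) * b) := by
  constructor
  · intro h
    have h2 : (b * a) * ((a * b) * w * (b * a)) * (a * b)
        = (b * a) * ((b * a) ^ n * b) * (a * b) := by rw [h]
    rwa [conj_cancel ha hb, shift_eq] at h2
  · intro h
    rw [h, ← shift_eq, conj_cancel hb ha]

end GroupLemmas

/-! ### The sign representation on `G × ℤˣ` -/

section SignRep

lemma end_mul_apply {α : Type*} (f g : Function.End α) (x : α) : (f * g) x = f (g x) := rfl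

lemma ite_neg_mul (p q : Prop) [Decidable p] [Decidable q] (ε : ℤˣ) :
    (if q then -(if p then -ε else ε) else (if p then -ε else ε))
      = ε * ((if p then (-1 : ℤˣ) else 1) * (if q then (-1 : ℤˣ) else 1)) := by
  by_cases hp : p <;> by_cases hq : q <;> simp [hp, hq]

open Classical in
/-- The sign-tracking endomorphism attached to an involution `a`. -/
def refSign {G : Type*} [Group G] (a : G) : Function.End (G × ℤˣ) := fun p =>
  (a * p.1 * a, if p.1 = a then -p.2 else p.2)

open Classical in
lemma refSign_mul_pow_apply {G : Type*} [Group G] {a b : G}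
    (ha : a * a = 1) (hb : b * b = 1) (k : ℕ) (w : G) (ε : ℤˣ) :
    ((refSign a * refSign b) ^ k) (w, ε) =
      ((a * b) ^ k * w * (b * a) ^ k,
        ε * ∏ n ∈ Finset.range (2 * k),
          (if w = (b * a) ^ n * b then (-1 : ℤˣ) else 1)) := by
  induction k generalizing w ε with
  | zero =>
    rw [pow_zero]
    show (w, ε) = _
    simp
  | succ k ih =>
    rw [pow_succ, end_mul_apply]
    have hg : (refSign a * refSign b) (w, ε) =
        ((a * b) * w * (b * a),
          ε * ((if w = (b * a) ^ 0 * b then (-1 : ℤˣ) else 1) *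
               (if w = (b * a) ^ 1 * b then (-1 : ℤˣ) else 1))) := by
      show refSign a (refSign b (w, ε)) = _
      simp only [refSign, pow_zero, one_mul, pow_one]
      refine Prod.ext ?_ ?_
      · simp only [mul_assoc]
      · simp only [sandwich hb w a]
        exact ite_neg_mul _ _ ε
    rw [hg, ih]
    refine Prod.ext ?_ ?_
    · show (a * b) ^ k * ((a * b) * w * (b * a)) * (b * a) ^ k = _
      calc (a * b) ^ k * ((a * b) * w * (b * a)) * (b * a) ^ k
          = ((a * b) ^ k * (a * b)) * w * ((b * a) * (b * a) ^ k) := by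
            simp only [mul_assoc]
        _ = (a * b) ^ (k + 1) * w * (b * a) ^ (k + 1) := by
            rw [← pow_succ, ← pow_succ']
    · show (ε * _) * _ = ε * _
      rw [mul_assoc]
      congr 1
      simp only [shift_iff ha hb]
      rw [show 2 * (k + 1) = 2 + 2 * k from by ring, Finset.prod_range_add,
        Finset.prod_range_succ, Finset.prod_range_one]

variable {B : Type*} {W : Type*} [Group W] {M : CoxeterMatrix B} (cs : CoxeterSystem M W)

lemma refSign_liftable :
    M.IsLiftable (fun i => refSign (cs.simple i) : B → Function.End (W × ℤˣ)) := by
  classical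
  intro i i'
  funext p
  obtain ⟨w, ε⟩ := p
  have ha := cs.simple_mul_simple_self i
  have hb := cs.simple_mul_simple_self i'
  rw [refSign_mul_pow_apply ha hb]
  show _ = (w, ε)
  have hp1 : (cs.simple i * cs.simple i') ^ M i i' = 1 := cs.simple_mul_simple_pow i i'
  have hp2 : (cs.simple i' * cs.simple i) ^ M i i' = 1 := cs.simple_mul_simple_pow' i i'
  refine Prod.ext ?_ ?_
  · show _ = w
    rw [hp1, hp2, one_mul, mul_one]
  · show ε * _ = ε
    have hshift : ∀ x : ℕ, (cs.simple i' * cs.simple i) ^ (M i i' + x)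
        = (cs.simple i' * cs.simple i) ^ x := fun x => by rw [pow_add, hp2, one_mul]
    have hsq : ∀ (c : Prop) (inst : Decidable c),
        (if c then (-1 : ℤˣ) else 1) * (if c then (-1 : ℤˣ) else 1) = 1 := by
      intro c inst
      by_cases h : c <;> simp [h]
    rw [two_mul, Finset.prod_range_add]
    beta_reduce
    have hre : ∀ x ∈ Finset.range (M i i'),
        (if w = (cs.simple i' * cs.simple i) ^ (M i i' + x) * cs.simple i'
          then (-1 : ℤˣ) else 1)
        = (if w = (cs.simple i' * cs.simple i) ^ x * cs.simple i'
          then (-1 : ℤˣ) else 1) :=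
      fun x _ => if_congr (by rw [hshift]) rfl rfl
    rw [Finset.prod_congr rfl hre, ← Finset.prod_mul_distrib,
      Finset.prod_congr rfl (fun n _ => hsq _ _), Finset.prod_const_one, mul_one]

/-- The sign representation of the Coxeter group. -/
def sgnRep : W →* Function.End (W × ℤˣ) :=
  cs.lift ⟨fun i => refSign (cs.simple i), refSign_liftable cs⟩

lemma sgnRep_simple (i : B) : sgnRep cs (cs.simple i) = refSign (cs.simple i) :=
  cs.lift_apply_simple _ i

/-- `etaFn cs w ρ = -1` iff `ρ` is a right inversion of `w`. -/
def etaFn (w ρ : W) : ℤˣ := (sgnRep cs w (ρ, 1)).2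

open Classical in
def listSgn (l : List W) (ρ : W) : ℤˣ :=
  (l.map (fun c => if ρ = c then (-1 : ℤˣ) else 1)).prod

open Classical in
lemma listSgn_cons (c : W) (l : List W) (ρ : W) :
    listSgn (c :: l) ρ = (if ρ = c then (-1 : ℤˣ) else 1) * listSgn l ρ := by
  simp [listSgn]

lemma listSgn_of_not_mem {l : List W} {ρ : W} (h : ρ ∉ l) : listSgn l ρ = 1 := by
  induction l with
  | nil => simp [listSgn]
  | cons c l ih =>
    have h1 : ρ ≠ c := fun hh => h (hh ▸ (List.mem_cons_self : c ∈ c :: l))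
    have h2 : ρ ∉ l := fun hh => h (List.mem_cons_of_mem c hh)
    rw [listSgn_cons, if_neg h1, one_mul, ih h2]

open Classical in
lemma sgnRep_wordProd (ω : List B) (ρ : W) (ε : ℤˣ) :
    sgnRep cs (cs.wordProd ω) (ρ, ε) =
      (cs.wordProd ω * ρ * (cs.wordProd ω)⁻¹, ε * listSgn (cs.rightInvSeq ω) ρ) := by
  induction ω generalizing ρ ε with
  | nil =>
    rw [cs.wordProd_nil, map_one]
    show (ρ, ε) = _
    simp [listSgn]
  | cons i ω ih =>
    rw [cs.wordProd_cons, map_mul, end_mul_apply, ih]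
    rw [sgnRep_simple]
    have hris : cs.rightInvSeq (i :: ω)
        = ((cs.wordProd ω)⁻¹ * cs.simple i * cs.wordProd ω) :: cs.rightInvSeq ω := rfl
    rw [hris, listSgn_cons]
    have hc : (cs.wordProd ω * ρ * (cs.wordProd ω)⁻¹ = cs.simple i)
        ↔ (ρ = (cs.wordProd ω)⁻¹ * cs.simple i * cs.wordProd ω) := by
      constructor
      · intro h; rw [← h]; group
      · intro h; rw [h]; group
    refine Prod.ext ?_ ?_
    · show cs.simple i * (cs.wordProd ω * ρ * (cs.wordProd ω)⁻¹) * cs.simple i = _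
      rw [mul_inv_rev, cs.inv_simple]
      simp only [mul_assoc]
    · show (if cs.wordProd ω * ρ * (cs.wordProd ω)⁻¹ = cs.simple i
          then -(ε * listSgn (cs.rightInvSeq ω) ρ) else ε * listSgn (cs.rightInvSeq ω) ρ) = _
      simp only [hc]
      by_cases h : ρ = (cs.wordProd ω)⁻¹ * cs.simple i * cs.wordProd ω <;>
        simp [h, mul_comm, mul_left_comm]

lemma etaFn_wordProd (ω : List B) (ρ : W) :
    etaFn cs (cs.wordProd ω) ρ = listSgn (cs.rightInvSeq ω) ρ := by
  unfold etaFn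
  rw [sgnRep_wordProd]
  exact one_mul _

lemma sgnRep_apply (w ρ : W) (ε : ℤˣ) :
    sgnRep cs w (ρ, ε) = (w * ρ * w⁻¹, ε * etaFn cs w ρ) := by
  obtain ⟨ω, _, rfl⟩ := cs.exists_reduced_word' w
  rw [sgnRep_wordProd, etaFn_wordProd]

lemma etaFn_mul (u v ρ : W) :
    etaFn cs (u * v) ρ = etaFn cs v ρ * etaFn cs u (v * ρ * v⁻¹) := by
  have h : sgnRep cs (u * v) (ρ, 1)
      = (u * (v * ρ * v⁻¹) * u⁻¹, (1 * etaFn cs v ρ) * etaFn cs u (v * ρ * v⁻¹)) := by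
    rw [map_mul, end_mul_apply, sgnRep_apply, sgnRep_apply]
  show (sgnRep cs (u * v) (ρ, 1)).2 = _
  rw [h]
  show (1 * etaFn cs v ρ) * etaFn cs u (v * ρ * v⁻¹) = _
  rw [one_mul]

lemma etaFn_one (ρ : W) : etaFn cs 1 ρ = 1 := by
  unfold etaFn
  rw [map_one]
  rfl

open Classical in
lemma etaFn_simple (i : B) (ρ : W) :
    etaFn cs (cs.simple i) ρ = if ρ = cs.simple i then -1 else 1 := by
  unfold etaFn
  rw [sgnRep_simple]
  simp [refSign]

lemma units_one_ne_neg_one : (1 : ℤˣ) ≠ -1 := by decide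

lemma etaFn_refl_self {ρ : W} (hρ : cs.IsReflection ρ) : etaFn cs ρ ρ = -1 := by
  obtain ⟨u, i, rfl⟩ := hρ
  have e1 := etaFn_mul cs (u * cs.simple i) u⁻¹ (u * cs.simple i * u⁻¹)
  have e2 : u⁻¹ * (u * cs.simple i * u⁻¹) * u⁻¹⁻¹ = cs.simple i := by group
  rw [e2] at e1
  have e3 := etaFn_mul cs u (cs.simple i) (cs.simple i)
  have e4 : cs.simple i * cs.simple i * (cs.simple i)⁻¹ = cs.simple i := by group
  have e5 : etaFn cs (cs.simple i) (cs.simple i) = -1 := by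
    rw [etaFn_simple, if_pos rfl]
  rw [e4, e5] at e3
  have e6 : etaFn cs u (cs.simple i) * etaFn cs u⁻¹ (u * cs.simple i * u⁻¹) = 1 := by
    have e7 := etaFn_mul cs u⁻¹ u (cs.simple i)
    rw [inv_mul_cancel, etaFn_one] at e7
    exact e7.symm
  rw [e1, e3]
  calc etaFn cs u⁻¹ (u * cs.simple i * u⁻¹) * (-1 * etaFn cs u (cs.simple i))
      = -1 * (etaFn cs u (cs.simple i) * etaFn cs u⁻¹ (u * cs.simple i * u⁻¹)) := by
        rw [mul_comm, mul_assoc]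
    _ = -1 := by rw [e6, mul_one]

lemma length_lt_of_etaFn {ρ : W} (hρ : cs.IsReflection ρ) (w : W)
    (h : etaFn cs w ρ = -1) : cs.length (w * ρ) < cs.length w := by
  obtain ⟨ω, hred, rfl⟩ := cs.exists_reduced_word' w
  rw [etaFn_wordProd] at h
  have hmem : ρ ∈ cs.rightInvSeq ω := by
    by_contra hn
    rw [listSgn_of_not_mem hn] at h
    exact units_one_ne_neg_one h
  exact (cs.isRightInversion_of_mem_rightInvSeq hred hmem).2

lemma etaFn_eq_neg_one_iff {ρ : W} (hρ : cs.IsReflection ρ) (w : W) :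
    etaFn cs w ρ = -1 ↔ cs.length (w * ρ) < cs.length w := by
  refine ⟨length_lt_of_etaFn cs hρ w, fun h => ?_⟩
  have h1 : ¬ cs.length ((w * ρ) * ρ) < cs.length (w * ρ) := by
    rw [mul_assoc, hρ.mul_self, mul_one]
    omega
  have h2 : etaFn cs (w * ρ) ρ = 1 := by
    rcases Int.units_eq_one_or (etaFn cs (w * ρ) ρ) with h' | h'
    · exact h'
    · exact absurd (length_lt_of_etaFn cs hρ _ h') h1
  have h5 := etaFn_mul cs w ρ ρ
  have h4 : ρ * ρ * ρ⁻¹ = ρ := by group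
  rw [h4, etaFn_refl_self cs hρ, h2] at h5
  rcases Int.units_eq_one_or (etaFn cs w ρ) with h' | h'
  · rw [h'] at h5
    exact absurd h5.symm (by decide)
  · exact h'

/-- Key step: if `s i` and `s j` commute and are distinct, then a right descent `i` of
`x * s j` is already a right descent of `x`. -/
lemma descent_transfer (i j : B)
    (hcomm : cs.simple i * cs.simple j = cs.simple j * cs.simple i)
    (hne : cs.simple i ≠ cs.simple j) (x : W)
    (hx : ¬ cs.IsRightDescent x i) :
    ¬ cs.IsRightDescent (x * cs.simple j) i := by
  intro h
  have hrefl : cs.IsReflection (cs.simple i) := cs.isReflection_simple i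
  have h1 : etaFn cs (x * cs.simple j) (cs.simple i) = -1 :=
    (etaFn_eq_neg_one_iff cs hrefl _).mpr h
  rw [etaFn_mul] at h1
  have hconj : cs.simple j * cs.simple i * (cs.simple j)⁻¹ = cs.simple i := by
    rw [cs.inv_simple, ← hcomm, mul_assoc, cs.simple_mul_simple_self, mul_one]
  rw [hconj, etaFn_simple, if_neg hne, one_mul] at h1
  exact hx ((etaFn_eq_neg_one_iff cs hrefl x).mp h1)

end SignRep

/-! ### A matrix representation distinguishing the simple reflections -/

section MatrixRep

open Matrix

lemma pow_swap_eq_one {Mo : Type*} [Monoid Mo] {x y : Mo} (hx : x * x = 1) (hy : y * y = 1)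
    {k : ℕ} (h : (x * y) ^ k = 1) : (y * x) ^ k = 1 := by
  have hxy : (y * x) * (x * y) = 1 := by
    rw [mul_assoc, ← mul_assoc x x y, hx, one_mul, hy]
  have key : ∀ n : ℕ, (y * x) ^ n * (x * y) ^ n = 1 := by
    intro n
    induction n with
    | zero => simp
    | succ n ih =>
      calc (y * x) ^ (n + 1) * (x * y) ^ (n + 1)
          = ((y * x) ^ n * (y * x)) * ((x * y) * (x * y) ^ n) := by rw [pow_succ, pow_succ']
        _ = (y * x) ^ n * (((y * x) * (x * y)) * (x * y) ^ n) := by simp only [mul_assoc]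
        _ = (y * x) ^ n * (x * y) ^ n := by rw [hxy, one_mul]
        _ = 1 := ih
  have := key k
  rwa [h, mul_one] at this

lemma diag3_pow (x y z : ℂ) (k : ℕ) :
    (!![x, 0, 0; 0, y, 0; 0, 0, z] : Matrix (Fin 3) (Fin 3) ℂ) ^ k
      = !![x ^ k, 0, 0; 0, y ^ k, 0; 0, 0, z ^ k] := by
  induction k with
  | zero => simp [Matrix.one_fin_three]
  | succ k ih =>
    rw [pow_succ, ih, Matrix.mul_fin_three]
    simp [pow_succ]

lemma pow_eq_one_of_conj {A Q D : Matrix (Fin 3) (Fin 3) ℂ} (h : A * Q = Q * D)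
    (hQ : IsUnit Q.det) {k : ℕ} (hD : D ^ k = 1) : A ^ k = 1 := by
  have key : ∀ n : ℕ, A ^ n * Q = Q * D ^ n := by
    intro n
    induction n with
    | zero => simp
    | succ n ih =>
      calc A ^ (n + 1) * Q = A ^ n * (A * Q) := by rw [pow_succ, mul_assoc]
        _ = A ^ n * (Q * D) := by rw [h]
        _ = (A ^ n * Q) * D := by rw [mul_assoc]
        _ = Q * D ^ (n + 1) := by rw [ih, pow_succ, mul_assoc]
  calc A ^ k = A ^ k * (Q * Q⁻¹) := by rw [Matrix.mul_nonsing_inv Q hQ, mul_one]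
    _ = (A ^ k * Q) * Q⁻¹ := by rw [mul_assoc]
    _ = (Q * D ^ k) * Q⁻¹ := by rw [key]
    _ = Q * Q⁻¹ := by rw [hD, mul_one]
    _ = 1 := Matrix.mul_nonsing_inv Q hQ

lemma exp_facts (m : ℕ) (hm : 2 ≤ m) :
    ∃ μ : ℂ, μ ≠ 0 ∧ μ ^ 2 ≠ 1 ∧ (μ ^ 2) ^ m = 1 := by
  have hmc : (m : ℂ) ≠ 0 := Nat.cast_ne_zero.mpr (by omega)
  have hπ : (Real.pi : ℂ) ≠ 0 := by
    exact_mod_cast Complex.ofReal_ne_zero.mpr Real.pi_ne_zero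
  refine ⟨Complex.exp (Real.pi * Complex.I / m), Complex.exp_ne_zero _, ?_, ?_⟩
  · rw [show (2 : ℕ) = 2 from rfl] at *
    rw [show (Complex.exp (Real.pi * Complex.I / m)) ^ 2
        = Complex.exp ((2 : ℕ) * (Real.pi * Complex.I / m)) from
      (Complex.exp_nat_mul _ 2).symm]
    intro h
    obtain ⟨n, hn⟩ := Complex.exp_eq_one_iff.mp h
    have h3 : ((2 : ℕ) * (Real.pi * Complex.I / m)) * m = ((n : ℂ) * (2 * Real.pi * Complex.I)) * m := by
      rw [hn]
    have h4 : (2 : ℂ) * Real.pi * Complex.I * 1 = 2 * Real.pi * Complex.I * ((n : ℂ) * m) := by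
      field_simp at h3
      push_cast
      ring_nf
      ring_nf at h3
      linear_combination (↑Real.pi * Complex.I) * h3
    have h5 : (1 : ℂ) = (n : ℂ) * m :=
      mul_left_cancel₀ (by simp [hπ, Complex.I_ne_zero]) h4
    have h6 : ((1 : ℤ) : ℂ) = (((n * m : ℤ) : ℂ)) := by push_cast; exact h5
    have h7 : (1 : ℤ) = n * m := by exact_mod_cast h6
    have h8 : (m : ℤ) ∣ 1 := ⟨n, by linarith [h7]⟩
    have h9 : (m : ℤ) ≤ 1 := Int.le_of_dvd one_pos h8
    omega
  · rw [← pow_mul, show (Complex.exp (Real.pi * Complex.I / m)) ^ (2 * m)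
        = Complex.exp ((2 * m : ℕ) * (Real.pi * Complex.I / m)) from
      (Complex.exp_nat_mul _ (2 * m)).symm]
    rw [show ((2 * m : ℕ) : ℂ) * (Real.pi * Complex.I / m) = 2 * Real.pi * Complex.I from by
      push_cast
      field_simp]
    exact Complex.exp_two_pi_mul_I

lemma sq_inv_ne (μ : ℂ) (hμ0 : μ ≠ 0) (hμ1 : μ ^ 2 ≠ 1) : μ - μ⁻¹ ≠ 0 := by
  intro h
  apply hμ1
  have hμi : μ = μ⁻¹ := sub_eq_zero.mp h
  calc μ ^ 2 = μ * μ := sq μ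
    _ = μ * μ⁻¹ := by rw [← hμi]
    _ = 1 := mul_inv_cancel₀ hμ0

lemma four_sub_sq_ne (μ : ℂ) (hμ0 : μ ≠ 0) (hμ1 : μ ^ 2 ≠ 1) :
    (4 : ℂ) - (μ + μ⁻¹) ^ 2 ≠ 0 := by
  have hid : (4 : ℂ) - (μ + μ⁻¹) ^ 2 = -((μ - μ⁻¹) ^ 2) := by
    field_simp
    ring
  rw [hid]
  exact neg_ne_zero.mpr (pow_ne_zero 2 (sq_inv_ne μ hμ0 hμ1))

lemma rel_sr (μ γ₂ : ℂ) (hμ0 : μ ≠ 0) (hμ1 : μ ^ 2 ≠ 1) {m : ℕ} (hm : (μ ^ 2) ^ m = 1) :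
    ((!![-1, μ + μ⁻¹, γ₂; 0, 1, 0; 0, 0, 1] : Matrix (Fin 3) (Fin 3) ℂ) *
      !![1, 0, 0; μ + μ⁻¹, -1, 0; 0, 0, 1]) ^ m = 1 := by
  have hsub : μ ^ 2 - 1 ≠ 0 := sub_ne_zero.mpr hμ1
  have h4 := four_sub_sq_ne μ hμ0 hμ1
  refine pow_eq_one_of_conj
    (Q := !![μ, 1, 2 * γ₂; 1, μ, (μ + μ⁻¹) * γ₂; 0, 0, 4 - (μ + μ⁻¹) ^ 2])
    (D := !![μ ^ 2, 0, 0; 0, (μ ^ 2)⁻¹, 0; 0, 0, 1]) ?_ ?_ ?_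
  · ext i j
    fin_cases i <;> fin_cases j <;>
      simp [Matrix.mul_apply, Fin.sum_univ_three, Matrix.vecHead, Matrix.vecTail] <;>
      field_simp <;> ring
  · have hdet : (!![μ, 1, 2 * γ₂; 1, μ, (μ + μ⁻¹) * γ₂; 0, 0, 4 - (μ + μ⁻¹) ^ 2] :
        Matrix (Fin 3) (Fin 3) ℂ).det = (μ ^ 2 - 1) * (4 - (μ + μ⁻¹) ^ 2) := by
      rw [Matrix.det_fin_three]
      simp
      ring
    rw [isUnit_iff_ne_zero, hdet]
    exact mul_ne_zero hsub h4
  · rw [diag3_pow, hm, inv_pow, hm, inv_one, one_pow]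
    exact Matrix.one_fin_three.symm

lemma rel_st (ν γ₁ : ℂ) (hν0 : ν ≠ 0) (hν1 : ν ^ 2 ≠ 1) {m : ℕ} (hm : (ν ^ 2) ^ m = 1) :
    ((!![-1, γ₁, ν + ν⁻¹; 0, 1, 0; 0, 0, 1] : Matrix (Fin 3) (Fin 3) ℂ) *
      !![1, 0, 0; 0, 1, 0; ν + ν⁻¹, 0, -1]) ^ m = 1 := by
  have hsub : (1 : ℂ) - ν ^ 2 ≠ 0 := sub_ne_zero.mpr (Ne.symm hν1)
  have h4 := four_sub_sq_ne ν hν0 hν1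
  refine pow_eq_one_of_conj
    (Q := !![ν, 1, 2 * γ₁; 0, 0, 4 - (ν + ν⁻¹) ^ 2; 1, ν, γ₁ * (ν + ν⁻¹)])
    (D := !![ν ^ 2, 0, 0; 0, (ν ^ 2)⁻¹, 0; 0, 0, 1]) ?_ ?_ ?_
  · ext i j
    fin_cases i <;> fin_cases j <;>
      simp [Matrix.mul_apply, Fin.sum_univ_three, Matrix.vecHead, Matrix.vecTail] <;>
      field_simp <;> ring
  · have hdet : (!![ν, 1, 2 * γ₁; 0, 0, 4 - (ν + ν⁻¹) ^ 2; 1, ν, γ₁ * (ν + ν⁻¹)] :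
        Matrix (Fin 3) (Fin 3) ℂ).det = (4 - (ν + ν⁻¹) ^ 2) * (1 - ν ^ 2) := by
      rw [Matrix.det_fin_three]
      simp
      ring
    rw [isUnit_iff_ne_zero, hdet]
    exact mul_ne_zero h4 hsub
  · rw [diag3_pow, hm, inv_pow, hm, inv_one, one_pow]
    exact Matrix.one_fin_three.symm

variable {B : Type*} {W : Type*} [Group W] {M : CoxeterMatrix B}

lemma simples_ne (cs : CoxeterSystem M W)
    (r s t : B) (hrs : r ≠ s) (hrt : r ≠ t) (hst : s ≠ t)
    (hB : ∀ i : B, i = r ∨ i = s ∨ i = t)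
    (mrt : M r t = 2) (hsr : 2 ≤ M s r) (hst2 : 2 ≤ M s t) :
    cs.simple r ≠ cs.simple t := by
  classical
  obtain ⟨μ, hμ0, hμ1, hμm⟩ := exp_facts (M s r) hsr
  obtain ⟨ν, hν0, hν1, hνm⟩ := exp_facts (M s t) hst2
  have hAs : True := trivial
  set As : Matrix (Fin 3) (Fin 3) ℂ := !![-1, μ + μ⁻¹, ν + ν⁻¹; 0, 1, 0; 0, 0, 1] with hAsd
  set Ar : Matrix (Fin 3) (Fin 3) ℂ := !![1, 0, 0; μ + μ⁻¹, -1, 0; 0, 0, 1] with hArd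
  set At : Matrix (Fin 3) (Fin 3) ℂ := !![1, 0, 0; 0, 1, 0; ν + ν⁻¹, 0, -1] with hAtd
  set f : B → Matrix (Fin 3) (Fin 3) ℂ :=
    fun i => if i = r then Ar else if i = s then As else At with hfd
  have hfr : f r = Ar := by simp [hfd]
  have hfs : f s = As := by simp [hfd, Ne.symm hrs]
  have hft : f t = At := by simp [hfd, Ne.symm hrt, Ne.symm hst]
  have hAs2 : As * As = 1 := by
    rw [hAsd]
    ext i j
    fin_cases i <;> fin_cases j <;>
      simp [Matrix.mul_apply, Fin.sum_univ_three, Matrix.vecHead, Matrix.vecTail,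
        Matrix.one_apply, Fin.ext_iff] <;> ring
  have hAr2 : Ar * Ar = 1 := by
    rw [hArd]
    ext i j
    fin_cases i <;> fin_cases j <;>
      simp [Matrix.mul_apply, Fin.sum_univ_three, Matrix.vecHead, Matrix.vecTail,
        Matrix.one_apply, Fin.ext_iff] <;> ring
  have hAt2 : At * At = 1 := by
    rw [hAtd]
    ext i j
    fin_cases i <;> fin_cases j <;>
      simp [Matrix.mul_apply, Fin.sum_univ_three, Matrix.vecHead, Matrix.vecTail,
        Matrix.one_apply, Fin.ext_iff] <;> ring
  have hsr_rel : (As * Ar) ^ M s r = 1 := rel_sr μ (ν + ν⁻¹) hμ0 hμ1 hμm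
  have hst_rel : (As * At) ^ M s t = 1 := rel_st ν (μ + μ⁻¹) hν0 hν1 hνm
  have hrt_rel : (Ar * At) ^ 2 = 1 := by
    rw [hArd, hAtd, pow_two]
    ext i j
    fin_cases i <;> fin_cases j <;>
      simp [Matrix.mul_apply, Fin.sum_univ_three, Matrix.vecHead, Matrix.vecTail,
        Matrix.one_apply, Fin.ext_iff] <;> ring
  have hlift : M.IsLiftable f := by
    intro i i'
    rcases hB i with h | h | h <;> rcases hB i' with h' | h' | h' <;> rw [h, h'] <;>
      simp only [hfr, hfs, hft]
    · rw [M.diagonal r, pow_one, hAr2]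
    · rw [M.symmetric r s]
      exact pow_swap_eq_one hAs2 hAr2 hsr_rel
    · rw [mrt]
      exact hrt_rel
    · exact hsr_rel
    · rw [M.diagonal s, pow_one, hAs2]
    · exact hst_rel
    · rw [M.symmetric t r, mrt]
      exact pow_swap_eq_one hAr2 hAt2 hrt_rel
    · rw [M.symmetric t s]
      exact pow_swap_eq_one hAs2 hAt2 hst_rel
    · rw [M.diagonal t, pow_one, hAt2]
  intro heq
  have h2 := congrArg (cs.lift ⟨f, hlift⟩) heq
  rw [cs.lift_apply_simple, cs.lift_apply_simple, hfr, hft] at h2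
  have h3 := congrFun (congrFun h2 1) 1
  rw [hArd, hAtd] at h3
  simp at h3
  norm_num at h3

end MatrixRep

end Stmt7Aux

end

/-- if w = w₁·st and R(w₁s) = {s} then r ∉ R(w); if w = w₁·sr and R(w₁s) = {s} then t ∉ R(w). -/
theorem stmt7 {B : Type*} {W : Type*} [Group W] {M : CoxeterMatrix B}
    (cs : CoxeterSystem M W) (r s t : B)
    (hrs : r ≠ s) (hrt : r ≠ t) (hst : s ≠ t)
    (hB : ∀ i : B, i = r ∨ i = s ∨ i = t)
    (mrt : M r t = 2) (msr : 5 ≤ M s r) (mst : 4 ≤ M s t) (mstsr : M s t ≤ M s r)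
    (w : W) :
    (∀ w₁ : W, w = w₁ * cs.simple s * cs.simple t → cs.length w = cs.length w₁ + 2 →
      (∀ i : B, cs.IsRightDescent (w₁ * cs.simple s) i ↔ i = s) →
      ¬ cs.IsRightDescent w r) ∧
    (∀ w₁ : W, w = w₁ * cs.simple s * cs.simple r → cs.length w = cs.length w₁ + 2 →
      (∀ i : B, cs.IsRightDescent (w₁ * cs.simple s) i ↔ i = s) →
      ¬ cs.IsRightDescent w t) := by
  have hcomm : cs.simple r * cs.simple t = cs.simple t * cs.simple r := by
    have h := cs.simple_mul_simple_pow r t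
    rw [mrt, pow_two] at h
    have h2 : cs.simple r * cs.simple t = (cs.simple r * cs.simple t)⁻¹ :=
      eq_inv_of_mul_eq_one_left h
    rw [h2, mul_inv_rev, cs.inv_simple, cs.inv_simple]
  have hne : cs.simple r ≠ cs.simple t :=
    Stmt7Aux.simples_ne cs r s t hrs hrt hst hB mrt (by omega) (by omega)
  constructor
  · intro w₁ hw _hlen hdesc
    subst hw
    have hx : ¬ cs.IsRightDescent (w₁ * cs.simple s) r := fun hh => hrs ((hdesc r).mp hh)
    exact Stmt7Aux.descent_transfer cs r t hcomm hne (w₁ * cs.simple s) hx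
  · intro w₁ hw _hlen hdesc
    subst hw
    have hx : ¬ cs.IsRightDescent (w₁ * cs.simple s) t := fun hh => hst ((hdesc t).mp hh).symm
    exact Stmt7Aux.descent_transfer cs t r hcomm.symm hne.symm (w₁ * cs.simple s) hx
end

section
/- Let w ∈ W. If w = w₁tst for some w₁ ∈ W with ℓ(w) = ℓ(w₁) + 3, then r ∉ R(w); and if w = w₁rsr for some w₁ ∈ W with ℓ(w) = ℓ(w₁) + 3, then t ∉ R(w). -/
namespace Stmt8Aux

open CoxeterSystem List

variable {B : Type*} {W : Type*} [Group W] {M : CoxeterMatrix B} (cs : CoxeterSystem M W)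

local prefix:100 "σ" => cs.simple
local prefix:100 "π" => cs.wordProd
local prefix:100 "ℓ" => cs.length

lemma conj_eq_iff {G : Type*} [Group G] (A A' t v : G) :
    A * t * A' = v ↔ t = A⁻¹ * v * A'⁻¹ := by
  constructor
  · rintro rfl; group
  · rintro rfl; group

noncomputable section
open scoped Classical

/-- The basic involution used for the sign representation. -/
def phiFun (i : B) : W × ℤˣ → W × ℤˣ :=
  fun p => (σ i * p.1 * σ i, if p.1 = σ i then -p.2 else p.2)

lemma simple_cube (i : B) : σ i * σ i * σ i = σ i := by
  rw [cs.simple_mul_simple_self, one_mul]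

lemma conj_simple_eq_simple_iff (i : B) (t : W) :
    (σ i * t * σ i = σ i) ↔ t = σ i := by
  rw [conj_eq_iff, cs.inv_simple, simple_cube]

lemma phiFun_involutive (i : B) : Function.Involutive (phiFun cs i) := by
  rintro ⟨t, ε⟩
  simp only [phiFun]
  rw [Prod.mk.injEq]
  constructor
  · rw [show σ i * (σ i * t * σ i) * σ i = (σ i * σ i) * t * (σ i * σ i) by group]
    simp [cs.simple_mul_simple_self]
  · by_cases h : t = σ i
    · rw [if_pos ((conj_simple_eq_simple_iff cs i t).mpr h), if_pos h, neg_neg]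
    · rw [if_neg (fun hh => h ((conj_simple_eq_simple_iff cs i t).mp hh)), if_neg h]

def phi (i : B) : Equiv.Perm (W × ℤˣ) := (phiFun_involutive cs i).toPerm

lemma phi_apply (i : B) (t : W) (ε : ℤˣ) :
    phi cs i (t, ε) = (σ i * t * σ i, if t = σ i then -ε else ε) := rfl

lemma phi_pow (i j : B) (k : ℕ) (t : W) (ε : ℤˣ) :
    ((phi cs i * phi cs j) ^ k) (t, ε) =
      ((σ i * σ j) ^ k * t * (σ j * σ i) ^ k,
        ε * ∏ l ∈ Finset.range (2 * k),
          (if t = (σ j * σ i) ^ l * σ j then (-1 : ℤˣ) else 1)) := by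
  induction k generalizing t ε with
  | zero => simp
  | succ k ih =>
    have step : ((phi cs i * phi cs j) ^ (k+1)) (t, ε)
        = ((phi cs i * phi cs j) ^ k) ((phi cs i) ((phi cs j) (t, ε))) := by
      rw [pow_succ]
      rfl
    rw [step, phi_apply, phi_apply, ih]
    dsimp only
    set q := σ j * σ i with hq
    set g : ℕ → ℤˣ := fun l => if t = q ^ l * σ j then (-1 : ℤˣ) else 1 with hgdef
    have hg : ∀ l, g l = if t = q ^ l * σ j then (-1 : ℤˣ) else 1 := fun l => rfl
    have hqinv : q⁻¹ = σ i * σ j := by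
      rw [hq, mul_inv_rev, cs.inv_simple, cs.inv_simple]
    -- condition for the φ i flip
    have hc1 : (σ j * t * σ j = σ i) ↔ (t = q ^ 1 * σ j) := by
      rw [conj_eq_iff, cs.inv_simple, pow_one, hq]
    -- inner element as conjugation by q
    have harg : σ i * (σ j * t * σ j) * σ i = q⁻¹ * t * q := by
      rw [hqinv, hq]; group
    -- condition shift
    have hshift : ∀ l : ℕ, (q⁻¹ * t * q = q ^ l * σ j) ↔ (t = q ^ (l + 2) * σ j) := by
      intro l
      rw [show q⁻¹ * t * q = q⁻¹ * t * (q⁻¹)⁻¹ by rw [inv_inv], conj_eq_iff, inv_inv]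
      have expand : q * (q ^ l * σ j) * q⁻¹ = q ^ (l + 2) * σ j := by
        have hswap : σ j * q⁻¹ = q * σ j := by
          rw [hqinv, hq]; group
        calc q * (q ^ l * σ j) * q⁻¹ = q ^ (l+1) * (σ j * q⁻¹) := by
              rw [pow_succ']; group
          _ = q ^ (l+1) * (q * σ j) := by rw [hswap]
          _ = q ^ (l + 2) * σ j := by rw [pow_succ]; group
      rw [expand]
    rw [harg]
    rw [Prod.mk.injEq]
    constructor
    · rw [show q⁻¹ * t * q = q⁻¹ * t * (q⁻¹)⁻¹ by rw [inv_inv], ← hqinv, pow_succ, pow_succ']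
      group
    · -- sign computation
      have e1 : (if t = σ j then -ε else ε) = ε * g 0 := by
        rw [hg]
        by_cases h : t = σ j
        · rw [if_pos h, if_pos (by rw [pow_zero, one_mul]; exact h), mul_neg_one]
        · rw [if_neg h, if_neg (by rw [pow_zero, one_mul]; exact h), mul_one]
      have e2 : ∀ ε' : ℤˣ, (if σ j * t * σ j = σ i then -ε' else ε') = ε' * g 1 := by
        intro ε'
        rw [hg]
        by_cases h : σ j * t * σ j = σ i
        · rw [if_pos h, if_pos (hc1.mp h), mul_neg_one]
        · rw [if_neg h, if_neg (fun hh => h (hc1.mpr hh)), mul_one]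
      have e3 : (∏ l ∈ Finset.range (2 * k),
            (if q⁻¹ * t * q = q ^ l * σ j then (-1 : ℤˣ) else 1))
          = ∏ l ∈ Finset.range (2 * k), g (l + 2) := by
        apply Finset.prod_congr rfl
        intro l _
        rw [hg]
        by_cases h : t = q ^ (l+2) * σ j
        · rw [if_pos ((hshift l).mpr h), if_pos h]
        · rw [if_neg (fun hh => h ((hshift l).mp hh)), if_neg h]
      have e4 : (∏ l ∈ Finset.range (2 * (k+1)), g l)
          = ((∏ l ∈ Finset.range (2 * k), g (l + 2)) * g 1) * g 0 := by
        have h2 : 2 * (k+1) = (2 * k + 1) + 1 := by ring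
        rw [h2, Finset.prod_range_succ', Finset.prod_range_succ']
      rw [e1, e2, e3, e4]
      simp [mul_comm, mul_left_comm, mul_assoc]


lemma phi_liftable : CoxeterMatrix.IsLiftable M (phi cs) := by
  intro i j
  apply Equiv.ext
  rintro ⟨t, ε⟩
  rw [Equiv.Perm.one_apply, phi_pow]
  have h1 : (σ i * σ j) ^ M i j = 1 := cs.simple_mul_simple_pow i j
  have h2 : (σ j * σ i) ^ M i j = 1 := cs.simple_mul_simple_pow' i j
  rw [Prod.mk.injEq]
  constructor
  · rw [h1, h2, one_mul, mul_one]
  · have hsplit : (∏ l ∈ Finset.range (2 * M i j),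
        (if t = (σ j * σ i) ^ l * σ j then (-1 : ℤˣ) else 1))
        = (∏ l ∈ Finset.range (M i j),
            (if t = (σ j * σ i) ^ l * σ j then (-1 : ℤˣ) else 1))
          * (∏ l ∈ Finset.range (M i j),
            (if t = (σ j * σ i) ^ l * σ j then (-1 : ℤˣ) else 1)) := by
      rw [two_mul, Finset.prod_range_add]
      congr 1
      apply Finset.prod_congr rfl
      intro l _
      have : (σ j * σ i) ^ (M i j + l) = (σ j * σ i) ^ l := by
        rw [pow_add, h2, one_mul]
      rw [this]
    rw [hsplit, Int.units_mul_self, mul_one]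

/-- The sign representation. -/
def eta : W →* Equiv.Perm (W × ℤˣ) := cs.lift ⟨phi cs, phi_liftable cs⟩

lemma eta_simple (i : B) : eta cs (σ i) = phi cs i := cs.lift_apply_simple (phi_liftable cs) i

/-- If `t` doesn't appear in the right inversion sequence of `ω`, then `eta` of `π ω`
does not flip the sign at `t`. -/
lemma eta_eq_of_not_mem_ris (ω : List B) (t : W) (ε : ℤˣ) (h : t ∉ cs.rightInvSeq ω) :
    eta cs (π ω) (t, ε) = ((π ω) * t * (π ω)⁻¹, ε) := by
  induction ω generalizing ε with
  | nil => simp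
  | cons i ω ih =>
    have hris : cs.rightInvSeq (i :: ω) = ((π ω)⁻¹ * σ i * π ω) :: cs.rightInvSeq ω := rfl
    rw [hris, List.mem_cons] at h
    push_neg at h
    obtain ⟨h1, h2⟩ := h
    rw [cs.wordProd_cons, map_mul, Equiv.Perm.mul_apply, ih ε h2, eta_simple, phi_apply]
    have hcond : ¬ ((π ω) * t * (π ω)⁻¹ = σ i) := by
      intro hc
      apply h1
      rw [conj_eq_iff] at hc
      rw [hc]; group
    rw [if_neg hcond, Prod.mk.injEq]
    constructor
    · rw [mul_inv_rev, cs.inv_simple]; group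
    · rfl

/-- If `e` is a right descent of `w`, then `eta cs w` flips the sign at `σ e`. -/
lemma eta_snd_of_descent (w : W) (e : B) (hdesc : ℓ (w * σ e) < ℓ w) :
    (eta cs w (σ e, 1)).2 = -1 := by
  obtain ⟨τ, hτlen, hτprod⟩ := cs.exists_reduced_word (w * σ e)
  have hw : w = π τ * σ e := by
    rw [← hτprod]
    simp [mul_assoc, cs.simple_mul_simple_self]
  have hτred : cs.IsReduced τ := by
    exact hτlen
  have hnotmem : σ e ∉ cs.rightInvSeq τ := by
    intro hmem
    have hinv := cs.isRightInversion_of_mem_rightInvSeq hτred hmem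
    have := hinv.2
    rw [← hτprod] at this
    have hww : w * σ e * σ e = w := by simp [mul_assoc, cs.simple_mul_simple_self]
    rw [hww] at this
    omega
  rw [hw, map_mul, Equiv.Perm.mul_apply, eta_simple, phi_apply, if_pos rfl,
    show σ e * σ e * σ e = σ e from simple_cube cs e,
    eta_eq_of_not_mem_ris cs τ (σ e) (-1) hnotmem]

/-- Key exchange-type fact: a right-descent simple reflection occurs in the right
inversion sequence of any reduced word. -/
lemma simple_mem_ris_of_descent (ω : List B) (e : B)
    (hred : ℓ (π ω) = ω.length) (hdesc : ℓ (π ω * σ e) < ℓ (π ω)) :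
    σ e ∈ cs.rightInvSeq ω := by
  by_contra hnot
  have h1 := eta_eq_of_not_mem_ris cs ω (σ e) 1 hnot
  have h2 := eta_snd_of_descent cs (π ω) e hdesc
  rw [h1] at h2
  have h3 : (1 : ℤˣ) = -1 := h2
  exact absurd h3 (by decide)


lemma ris_append (κ v : List B) :
    cs.rightInvSeq (κ ++ v)
      = (cs.rightInvSeq κ).map (fun u => (π v)⁻¹ * u * (π v)) ++ cs.rightInvSeq v := by
  induction κ with
  | nil => simp
  | cons i κ ih =>
    have h1 : cs.rightInvSeq (i :: (κ ++ v))
        = ((π (κ ++ v))⁻¹ * σ i * π (κ ++ v)) :: cs.rightInvSeq (κ ++ v) := rfl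
    have h2 : cs.rightInvSeq (i :: κ) = ((π κ)⁻¹ * σ i * π κ) :: cs.rightInvSeq κ := rfl
    rw [List.cons_append, h1, ih, h2, List.map_cons, List.cons_append]
    congr 1
    rw [cs.wordProd_append, mul_inv_rev]
    group

lemma descent_length {x : W} {a : B} (ha : cs.IsRightDescent x a) :
    ℓ (x * σ a) + 1 = ℓ x := by
  have h1 := cs.length_mul_simple x a
  have h2 : ℓ (x * σ a) < ℓ x := ha
  omega

lemma length_mul_simple_le (x : W) (a : B) : ℓ (x * σ a) ≤ ℓ x + 1 := by
  have := cs.length_mul_le x (σ a)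
  simpa [cs.length_simple] using this

/-- `x` has a reduced word ending with `v`. -/
def Adapted (x : W) (v : List B) : Prop :=
  ∃ κ : List B, κ.length + v.length = ℓ x ∧ x = π (κ ++ v)

lemma adapted_length {x : W} {v : List B} (hv : Adapted cs x v) :
    ℓ (x * (π v)⁻¹) + v.length = ℓ x := by
  obtain ⟨κ, hlen, hx⟩ := hv
  have hxv : x * (π v)⁻¹ = π κ := by
    rw [hx, cs.wordProd_append]
    group
  have hle : ℓ (x * (π v)⁻¹) ≤ κ.length := by
    rw [hxv]; exact cs.length_wordProd_le κ
  have hge : ℓ x ≤ ℓ (x * (π v)⁻¹) + v.length := by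
    calc ℓ x = ℓ ((x * (π v)⁻¹) * π v) := by rw [mul_assoc, inv_mul_cancel, mul_one]
      _ ≤ ℓ (x * (π v)⁻¹) + ℓ (π v) := cs.length_mul_le _ _
      _ ≤ ℓ (x * (π v)⁻¹) + v.length := by
          have := cs.length_wordProd_le v
          omega
  omega

lemma adapted_single {x : W} {a : B} (ha : cs.IsRightDescent x a) : Adapted cs x [a] := by
  obtain ⟨κ, hlen, hprod⟩ := cs.exists_reduced_word (x * σ a)
  refine ⟨κ, ?_, ?_⟩
  · have := descent_length cs ha
    have hl : ℓ (π κ) = κ.length := hlen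
    rw [← hprod] at hl
    simp only [List.length_singleton]
    omega
  · rw [← List.concat_eq_append, cs.wordProd_concat, ← hprod]
    simp [mul_assoc, cs.simple_mul_simple_self]

lemma adapted_step {x : W} {v : List B} {e : B} (hv : Adapted cs x v)
    (he : cs.IsRightDescent x e) (hnot : σ e ∉ cs.rightInvSeq v) :
    Adapted cs x (v ++ [e]) := by
  obtain ⟨κ, hlen, hx⟩ := hv
  have hred : ℓ (π (κ ++ v)) = (κ ++ v).length := by
    rw [← hx, List.length_append]; omega
  have hdesc : ℓ (π (κ ++ v) * σ e) < ℓ (π (κ ++ v)) := by rw [← hx]; exact he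
  have hmem := simple_mem_ris_of_descent cs (κ ++ v) e hred hdesc
  rw [ris_append, List.mem_append] at hmem
  rcases hmem with hmem | hmem
  · obtain ⟨u, hu, hue⟩ := List.mem_map.mp hmem
    obtain ⟨n, hn, hget⟩ := List.mem_iff_getElem.mp hu
    have hn' : n < κ.length := by
      have := cs.length_rightInvSeq κ
      omega
    have hgetD : (cs.rightInvSeq κ).getD n 1 = u := by
      rw [List.getD_eq_getElem _ _ hn, hget]
    have herase : π κ * u = π (κ.eraseIdx n) := by
      rw [← hgetD]; exact cs.wordProd_mul_getD_rightInvSeq κ n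
    refine ⟨κ.eraseIdx n, ?_, ?_⟩
    · rw [List.length_eraseIdx_of_lt hn', List.length_append, List.length_singleton]
      omega
    · have hxe : x * σ e = π (κ.eraseIdx n ++ v) := by
        rw [hx, cs.wordProd_append, cs.wordProd_append, ← herase, ← hue]
        group
      rw [← List.append_assoc, ← List.concat_eq_append, cs.wordProd_concat, ← hxe]
      simp [mul_assoc, cs.simple_mul_simple_self]
  · exact absurd hmem hnot


lemma ris_cons (i : B) (ω : List B) :
    cs.rightInvSeq (i :: ω) = ((π ω)⁻¹ * σ i * π ω) :: cs.rightInvSeq ω := rfl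

lemma ris_pair (a b : B) :
    cs.rightInvSeq [a, b] = [σ b * σ a * σ b, σ b] := by
  rw [ris_cons, cs.rightInvSeq_singleton]
  congr 1
  rw [cs.wordProd_singleton, cs.inv_simple]

lemma ris_triple (a b : B) :
    cs.rightInvSeq [a, b, a] = [σ a * σ b * σ a * σ b * σ a, σ a * σ b * σ a, σ a] := by
  rw [ris_cons, ris_pair]
  have hw : π [b, a] = σ b * σ a := by
    rw [cs.wordProd_cons, cs.wordProd_singleton]
  rw [hw, mul_inv_rev, cs.inv_simple, cs.inv_simple]
  simp [mul_assoc]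

/-- Level-2 chain: if `a` and `b` are both right descents of `x`, then
`ℓ(x σ_b σ_a) = ℓ(x) - 2`. -/
lemma chain2 {x : W} {a b : B} (E1 : σ a ≠ σ b)
    (ha : cs.IsRightDescent x a) (hb : cs.IsRightDescent x b) :
    ℓ (x * σ b * σ a) + 2 = ℓ x := by
  have A1 : Adapted cs x [a] := adapted_single cs ha
  have hnot : σ b ∉ cs.rightInvSeq [a] := by
    rw [cs.rightInvSeq_singleton, List.mem_singleton]
    exact E1.symm
  have A2 : Adapted cs x [a, b] := adapted_step cs A1 hb hnot
  have := adapted_length cs A2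
  have hπ : (π [a, b])⁻¹ = σ b * σ a := by
    rw [cs.wordProd_cons, cs.wordProd_singleton, mul_inv_rev, cs.inv_simple, cs.inv_simple]
  rw [hπ, ← mul_assoc] at this
  simpa using this

/-- Level-3 chain. -/
lemma chain3 {x : W} {a b : B} (E1 : σ a ≠ σ b) (E2 : σ a * σ b ≠ σ b * σ a)
    (ha : cs.IsRightDescent x a) (hb : cs.IsRightDescent x b) :
    ℓ (x * σ a * σ b * σ a) + 3 = ℓ x := by
  have A1 : Adapted cs x [a] := adapted_single cs ha
  have hnot1 : σ b ∉ cs.rightInvSeq [a] := by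
    rw [cs.rightInvSeq_singleton, List.mem_singleton]
    exact E1.symm
  have A2 : Adapted cs x [a, b] := adapted_step cs A1 hb hnot1
  have hnot2 : σ a ∉ cs.rightInvSeq [a, b] := by
    rw [ris_pair, List.mem_cons, List.mem_singleton]
    push_neg
    constructor
    · intro h
      apply E2
      have := congrArg (fun z => z * σ b) h
      rw [mul_assoc (σ b * σ a), cs.simple_mul_simple_self, mul_one] at this
      exact this
    · exact E1
  have A3 : Adapted cs x [a, b, a] := adapted_step cs A2 ha hnot2
  have := adapted_length cs A3
  have hπ : (π [a, b, a])⁻¹ = σ a * σ b * σ a := by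
    simp [cs.wordProd_cons, cs.wordProd_singleton, mul_inv_rev, cs.inv_simple, mul_assoc]
  rw [hπ, ← mul_assoc, ← mul_assoc] at this
  simpa using this

/-- Level-4 chain. -/
lemma chain4 {x : W} {a b : B} (E1 : σ a ≠ σ b) (E2 : σ a * σ b ≠ σ b * σ a)
    (E3 : (σ a * σ b) ^ 3 ≠ 1)
    (ha : cs.IsRightDescent x a) (hb : cs.IsRightDescent x b) :
    ℓ (x * σ b * σ a * σ b * σ a) + 4 = ℓ x := by
  have A1 : Adapted cs x [a] := adapted_single cs ha
  have hnot1 : σ b ∉ cs.rightInvSeq [a] := by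
    rw [cs.rightInvSeq_singleton, List.mem_singleton]
    exact E1.symm
  have A2 : Adapted cs x [a, b] := adapted_step cs A1 hb hnot1
  have hnot2 : σ a ∉ cs.rightInvSeq [a, b] := by
    rw [ris_pair, List.mem_cons, List.mem_singleton]
    push_neg
    constructor
    · intro h
      apply E2
      have := congrArg (fun z => z * σ b) h
      rw [mul_assoc (σ b * σ a), cs.simple_mul_simple_self, mul_one] at this
      exact this
    · exact E1
  have A3 : Adapted cs x [a, b, a] := adapted_step cs A2 ha hnot2
  have hnot3 : σ b ∉ cs.rightInvSeq [a, b, a] := by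
    rw [ris_triple, List.mem_cons, List.mem_cons, List.mem_singleton]
    push_neg
    refine ⟨?_, ?_, E1.symm⟩
    · intro h
      apply E3
      have h6 : σ b * (σ a * σ b * σ a * σ b * σ a) = 1 := by
        rw [← h, cs.simple_mul_simple_self]
      have : (σ b * σ a) ^ 3 = 1 := by
        rw [show (σ b * σ a) ^ 3 = σ b * (σ a * σ b * σ a * σ b * σ a) by
          simp [pow_succ, mul_assoc]]
        exact h6
      have hinv : ((σ a * σ b)⁻¹) ^ 3 = 1 := by
        rw [mul_inv_rev, cs.inv_simple, cs.inv_simple]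
        exact this
      rw [inv_pow] at hinv
      rwa [inv_eq_one] at hinv
    · intro h
      apply E2
      have := congrArg (fun z => z * σ a) h
      rw [mul_assoc (σ a * σ b), cs.simple_mul_simple_self, mul_one] at this
      exact this.symm
  have A4 : Adapted cs x [a, b, a, b] := adapted_step cs A3 hb hnot3
  have := adapted_length cs A4
  have hπ : (π [a, b, a, b])⁻¹ = σ b * σ a * σ b * σ a := by
    simp [cs.wordProd_cons, cs.wordProd_singleton, mul_inv_rev, cs.inv_simple, mul_assoc]
  rw [hπ, ← mul_assoc, ← mul_assoc, ← mul_assoc] at this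
  simpa using this

end
end Stmt8Aux


namespace Stmt8Mat

open Matrix Complex

noncomputable section

abbrev G3 := Matrix (Fin 3) (Fin 3) ℂ

def Mr (c d : ℂ) : G3 := !![-1, c, 0; 0, 1, 0; 0, 0, 1]
def Ms (c d : ℂ) : G3 := !![1, 0, 0; c, -1, d; 0, 0, 1]
def Mt (c d : ℂ) : G3 := !![1, 0, 0; 0, 1, 0; 0, d, -1]

lemma one_G3 : (1 : G3) = !![1, 0, 0; 0, 1, 0; 0, 0, 1] := Matrix.one_fin_three

lemma Mr_sq (c d : ℂ) : Mr c d * Mr c d = 1 := by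
  rw [Mr, Matrix.mul_fin_three, one_G3]
  norm_num

lemma Ms_sq (c d : ℂ) : Ms c d * Ms c d = 1 := by
  rw [Ms, Matrix.mul_fin_three, one_G3]
  norm_num

lemma Mt_sq (c d : ℂ) : Mt c d * Mt c d = 1 := by
  rw [Mt, Matrix.mul_fin_three, one_G3]
  norm_num

lemma MrMt_sq (c d : ℂ) : (Mr c d * Mt c d) * (Mr c d * Mt c d) = 1 := by
  rw [Mr, Mt, Matrix.mul_fin_three, Matrix.mul_fin_three, one_G3]
  norm_num

/-- generic: Y² = 1 → (XY)ⁿ = 1 → (YX)ⁿ = 1, in a monoid. -/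
lemma swap_pow {Mo : Type*} [Monoid Mo] {X Y : Mo} (hY : Y * Y = 1) {n : ℕ}
    (h : (X * Y) ^ n = 1) : (Y * X) ^ n = 1 := by
  have key : ∀ k : ℕ, (Y * X) ^ k * Y = Y * (X * Y) ^ k := by
    intro k
    induction k with
    | zero => simp
    | succ k ih =>
      rw [pow_succ, pow_succ, ← mul_assoc, mul_assoc ((Y*X)^k), mul_assoc ((Y*X)^k)]
      rw [show Y * X * Y = Y * (X * Y) by rw [mul_assoc], ← mul_assoc, ih]
      simp [mul_assoc]
  have := key n
  rw [h, mul_one] at this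
  calc (Y * X) ^ n = (Y * X) ^ n * (Y * Y) := by rw [hY, mul_one]
    _ = ((Y * X) ^ n * Y) * Y := by rw [mul_assoc]
    _ = Y * Y := by rw [this]
    _ = 1 := hY

section Zeta

variable {m : ℕ} (hm : 3 ≤ m)

def zeta (m : ℕ) : ℂ := Complex.exp (2 * Real.pi * Complex.I / ((2 * m : ℕ) : ℂ))

include hm

lemma zeta_prim : IsPrimitiveRoot (zeta m) (2 * m) :=
  Complex.isPrimitiveRoot_exp (2 * m) (by omega)

lemma zeta_ne_zero : zeta m ≠ 0 := (zeta_prim hm).ne_zero (by omega)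

lemma zeta_pow_2m : zeta m ^ (2 * m) = 1 := (zeta_prim hm).pow_eq_one

lemma zeta_dvd {n : ℕ} (h : zeta m ^ (2 * n) = 1) : m ∣ n := by
  have h2 := (zeta_prim hm).dvd_of_pow_eq_one _ h
  exact (Nat.mul_dvd_mul_iff_left (by norm_num : 0 < 2)).mp h2

lemma zeta_sq_ne_one : zeta m ^ 2 ≠ 1 := by
  intro h
  have h2 : m ∣ 1 := zeta_dvd hm (by rw [show 2 * 1 = 2 by norm_num, h])
  have := Nat.le_of_dvd (by norm_num) h2
  omega

lemma zeta_four_ne_one : zeta m ^ 4 ≠ 1 := by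
  intro h
  have h2 : m ∣ 2 := zeta_dvd hm (by rw [show 2 * 2 = 4 by norm_num, h])
  have := Nat.le_of_dvd (by norm_num) h2
  omega

/-- `c = ζ + ζ⁻¹`. -/
def czeta (m : ℕ) : ℂ := zeta m + (zeta m)⁻¹

lemma czeta_ne_zero : czeta m ≠ 0 := by
  intro h
  apply zeta_four_ne_one hm
  have hz := zeta_ne_zero hm
  have h2 : zeta m ^ 2 = -1 := by
    have := congrArg (fun z => z * zeta m) h
    simp only [czeta] at this
    field_simp at this
    linear_combination this
  rw [show (4:ℕ) = 2*2 by norm_num, pow_mul, h2]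
  norm_num

lemma czeta_sq_ne_four : czeta m ^ 2 ≠ 4 := by
  intro h
  apply zeta_sq_ne_one hm
  have hz := zeta_ne_zero hm
  simp only [czeta] at h
  have h2 : (zeta m ^ 2 - 1) ^ 2 = 0 := by
    field_simp at h
    linear_combination h
  have h3 := pow_eq_zero_iff (n := 2) (by norm_num) |>.mp h2
  rw [sub_eq_zero] at h3
  exact h3

end Zeta

lemma diag3 (a b c : ℂ) : Matrix.diagonal ![a, b, c] = !![a, 0, 0; 0, b, 0; 0, 0, c] := by
  ext i j
  fin_cases i <;> fin_cases j <;>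
    simp [Matrix.diagonal_apply, Matrix.vecHead, Matrix.vecTail]

lemma pow_conj_of_mul_eq {Q P D : G3} (h : Q * P = P * D) (n : ℕ) :
    Q ^ n * P = P * D ^ n := by
  induction n with
  | zero => simp
  | succ n ih =>
    rw [pow_succ, pow_succ, mul_assoc, h, ← mul_assoc, ih, mul_assoc]

lemma pow_one_iff_of_conj {Q P D : G3} (hP : Invertible P) (h : Q * P = P * D) (n : ℕ) :
    Q ^ n = 1 ↔ D ^ n = 1 := by
  constructor
  · intro hq
    have h2 := pow_conj_of_mul_eq h n
    rw [hq, one_mul] at h2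
    calc D ^ n = (⅟P * P) * D ^ n := by rw [invOf_mul_self, one_mul]
      _ = ⅟P * (P * D ^ n) := by rw [mul_assoc]
      _ = ⅟P * P := by rw [← h2]
      _ = 1 := invOf_mul_self P
  · intro hd
    have h2 := pow_conj_of_mul_eq h n
    rw [hd, mul_one] at h2
    calc Q ^ n = Q ^ n * (P * ⅟P) := by rw [mul_invOf_self, mul_one]
      _ = (Q ^ n * P) * ⅟P := by rw [mul_assoc]
      _ = P * ⅟P := by rw [h2]
      _ = 1 := mul_invOf_self P

section Pair

variable {m : ℕ} (hm : 3 ≤ m)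

def Psr (m : ℕ) (d : ℂ) : G3 :=
  !![czeta m, czeta m, d * czeta m;
     1 + zeta m ^ 2, 1 + (zeta m)⁻¹ ^ 2, 2 * d;
     0, 0, 4 - czeta m ^ 2]

def Dd (m : ℕ) : G3 := Matrix.diagonal ![zeta m ^ 2, (zeta m)⁻¹ ^ 2, 1]

def Pst (m : ℕ) (c : ℂ) : G3 :=
  !![0, 0, 4 - czeta m ^ 2;
     1 + zeta m ^ 2, 1 + (zeta m)⁻¹ ^ 2, 2 * c;
     czeta m, czeta m, c * czeta m]

include hm

lemma zeta_sq_sub_ne : (zeta m)⁻¹ ^ 2 - zeta m ^ 2 ≠ 0 := by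
  have hz := zeta_ne_zero hm
  intro h
  apply zeta_four_ne_one hm
  rw [sub_eq_zero] at h
  have := congrArg (fun z => z * zeta m ^ 2) h
  field_simp at this
  linear_combination - this

lemma Dd_pow_m : (Dd m) ^ m = 1 := by
  rw [Dd, Matrix.diagonal_pow]
  have h1 : (zeta m ^ 2) ^ m = 1 := by rw [← pow_mul]; exact zeta_pow_2m hm
  have h2 : ((zeta m)⁻¹ ^ 2) ^ m = 1 := by rw [← pow_mul, inv_pow, zeta_pow_2m hm, inv_one]
  have hv : ![zeta m ^ 2, (zeta m)⁻¹ ^ 2, 1] ^ m = fun _ => 1 := by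
    funext i
    fin_cases i <;> simp [Pi.pow_apply, h1, h2]
  rw [hv]
  exact Matrix.diagonal_one

lemma Dd_pow_div {n : ℕ} (h : (Dd m) ^ n = 1) : m ∣ n := by
  rw [Dd, Matrix.diagonal_pow] at h
  have h00 := congrFun (congrFun h 0) 0
  simp [Matrix.diagonal_apply, Matrix.one_apply] at h00
  apply zeta_dvd hm
  rw [pow_mul]
  exact h00

lemma QP_sr (d : ℂ) :
    (Ms (czeta m) d * Mr (czeta m) d) * Psr m d = Psr m d * Dd m := by
  have hz := zeta_ne_zero hm
  rw [Ms, Mr, Psr, Dd, diag3, Matrix.mul_fin_three, Matrix.mul_fin_three, Matrix.mul_fin_three]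
  ext i j
  fin_cases i <;> fin_cases j <;>
    (simp [czeta]; (try field_simp); (try ring))

lemma QP_st (c : ℂ) :
    (Ms c (czeta m) * Mt c (czeta m)) * Pst m c = Pst m c * Dd m := by
  have hz := zeta_ne_zero hm
  rw [Ms, Mt, Pst, Dd, diag3, Matrix.mul_fin_three, Matrix.mul_fin_three, Matrix.mul_fin_three]
  ext i j
  fin_cases i <;> fin_cases j <;>
    (simp [czeta]; (try field_simp); (try ring))

lemma factors_ne : (4 - czeta m ^ 2) * czeta m * ((zeta m)⁻¹ ^ 2 - zeta m ^ 2) ≠ 0 := by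
  apply mul_ne_zero (mul_ne_zero ?_ ?_) (zeta_sq_sub_ne hm)
  · exact sub_ne_zero.mpr (fun hh => czeta_sq_ne_four hm hh.symm)
  · exact czeta_ne_zero hm

lemma det_Psr_ne (d : ℂ) : (Psr m d).det ≠ 0 := by
  have hdet : (Psr m d).det
      = (4 - czeta m ^ 2) * czeta m * ((zeta m)⁻¹ ^ 2 - zeta m ^ 2) := by
    simp [Psr, Matrix.det_fin_three]
    try ring
  rw [hdet]
  exact factors_ne hm

lemma det_Pst_ne (c : ℂ) : (Pst m c).det ≠ 0 := by
  have hdet : (Pst m c).det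
      = -((4 - czeta m ^ 2) * czeta m * ((zeta m)⁻¹ ^ 2 - zeta m ^ 2)) := by
    simp [Pst, Matrix.det_fin_three]
    try ring
  rw [hdet]
  exact neg_ne_zero.mpr (factors_ne hm)

lemma sr_pow_m (d : ℂ) : (Ms (czeta m) d * Mr (czeta m) d) ^ m = 1 := by
  have hP : Invertible (Psr m d) :=
    Matrix.invertibleOfIsUnitDet _ (isUnit_iff_ne_zero.mpr (det_Psr_ne hm d))
  rw [pow_one_iff_of_conj hP (QP_sr hm d)]
  exact Dd_pow_m hm

lemma sr_pow_div (d : ℂ) {n : ℕ} (h : (Ms (czeta m) d * Mr (czeta m) d) ^ n = 1) : m ∣ n := by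
  have hP : Invertible (Psr m d) :=
    Matrix.invertibleOfIsUnitDet _ (isUnit_iff_ne_zero.mpr (det_Psr_ne hm d))
  rw [pow_one_iff_of_conj hP (QP_sr hm d)] at h
  exact Dd_pow_div hm h

lemma st_pow_m (c : ℂ) : (Ms c (czeta m) * Mt c (czeta m)) ^ m = 1 := by
  have hP : Invertible (Pst m c) :=
    Matrix.invertibleOfIsUnitDet _ (isUnit_iff_ne_zero.mpr (det_Pst_ne hm c))
  rw [pow_one_iff_of_conj hP (QP_st hm c)]
  exact Dd_pow_m hm

lemma st_pow_div (c : ℂ) {n : ℕ} (h : (Ms c (czeta m) * Mt c (czeta m)) ^ n = 1) : m ∣ n := by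
  have hP : Invertible (Pst m c) :=
    Matrix.invertibleOfIsUnitDet _ (isUnit_iff_ne_zero.mpr (det_Pst_ne hm c))
  rw [pow_one_iff_of_conj hP (QP_st hm c)] at h
  exact Dd_pow_div hm h

end Pair

open scoped Classical in
/-- assignment of matrices to the three generators -/
def fmat {B : Type*} (r s t : B) (c d : ℂ) : B → G3 := fun i =>
  if i = r then Mr c d else if i = s then Ms c d else Mt c d

end
end Stmt8Mat




namespace Stmt8Aux

open CoxeterSystem List Stmt8Mat

variable {B : Type*} {W : Type*} [Group W] {M : CoxeterMatrix B} (cs : CoxeterSystem M W)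

local prefix:100 "σ" => cs.simple
local prefix:100 "π" => cs.wordProd
local prefix:100 "ℓ" => cs.length

noncomputable section
open scoped Classical

section Separation

variable (r s t : B)
    (hrs : r ≠ s) (hrt : r ≠ t) (hst : s ≠ t)
    (hB : ∀ i : B, i = r ∨ i = s ∨ i = t)
    (mrt : M r t = 2) (msr : 5 ≤ M s r) (mst : 4 ≤ M s t)

include hrs hrt hst hB mrt msr mst

lemma fmat_liftable :
    CoxeterMatrix.IsLiftable M (fmat r s t (czeta (M s r)) (czeta (M s t))) := by
  intro i j
  set c := czeta (M s r)
  set d := czeta (M s t)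
  have hfr : fmat r s t c d r = Mr c d := by rw [fmat, if_pos rfl]
  have hfs : fmat r s t c d s = Ms c d := by rw [fmat, if_neg (Ne.symm hrs), if_pos rfl]
  have hft : fmat r s t c d t = Mt c d := by
    rw [fmat, if_neg (Ne.symm hrt), if_neg (Ne.symm hst)]
  have hmsr : 3 ≤ M s r := by omega
  have hmst : 3 ≤ M s t := by omega
  have hsr := sr_pow_m hmsr d
  have hst2 := st_pow_m hmst c
  have hrt2 : (Mr c d * Mt c d) ^ 2 = 1 := by rw [pow_two]; exact MrMt_sq c d
  rcases hB i with hi | hi | hi <;> rcases hB j with hj | hj | hj <;> rw [hi, hj]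
  · rw [M.diagonal, pow_one, hfr, Mr_sq]
  · rw [hfr, hfs, M.symmetric r s]
    exact swap_pow (Mr_sq c d) hsr
  · rw [hfr, hft, mrt, hrt2]
  · rw [hfs, hfr]
    exact hsr
  · rw [M.diagonal, pow_one, hfs, Ms_sq]
  · rw [hfs, hft]
    exact hst2
  · rw [hft, hfr, M.symmetric t r, mrt]
    exact swap_pow (Mt_sq c d) hrt2
  · rw [hft, hfs, M.symmetric t s]
    exact swap_pow (Mt_sq c d) hst2
  · rw [M.diagonal, pow_one, hft, Mt_sq]

lemma separation_facts :
    σ s ≠ σ r ∧ σ s ≠ σ t ∧ σ r ≠ σ t ∧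
    (σ s * σ r) ^ 2 ≠ 1 ∧ (σ s * σ r) ^ 3 ≠ 1 ∧
    (σ s * σ t) ^ 2 ≠ 1 ∧ (σ s * σ t) ^ 3 ≠ 1 := by
  set c := czeta (M s r)
  set d := czeta (M s t)
  set f := fmat r s t (B := B) c d with hf
  have hlift := fmat_liftable (M := M) r s t hrs hrt hst hB mrt msr mst
  set ψ := cs.lift ⟨f, hlift⟩ with hψdef
  have hψ : ∀ i : B, ψ (σ i) = f i := fun i => cs.lift_apply_simple hlift i
  have hfr : f r = Mr c d := by rw [hf, fmat, if_pos rfl]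
  have hfs : f s = Ms c d := by rw [hf, fmat, if_neg (Ne.symm hrs), if_pos rfl]
  have hft : f t = Mt c d := by
    rw [hf, fmat, if_neg (Ne.symm hrt), if_neg (Ne.symm hst)]
  have hmsr : 3 ≤ M s r := by omega
  have hmst : 3 ≤ M s t := by omega
  refine ⟨?_, ?_, ?_, ?_, ?_, ?_, ?_⟩
  · intro h
    have h2 := congrArg ψ h
    rw [hψ s, hψ r, hfs, hfr] at h2
    have h3 := congrFun (congrFun h2 1) 1
    simp [Ms, Mr] at h3
    norm_num at h3
  · intro h
    have h2 := congrArg ψ h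
    rw [hψ s, hψ t, hfs, hft] at h2
    have h3 := congrFun (congrFun h2 1) 1
    simp [Ms, Mt] at h3
    norm_num at h3
  · intro h
    have h2 := congrArg ψ h
    rw [hψ r, hψ t, hfr, hft] at h2
    have h3 := congrFun (congrFun h2 0) 0
    simp [Mr, Mt] at h3
    norm_num at h3
  · intro h
    have h2 := congrArg ψ h
    rw [map_pow, map_mul, map_one, hψ s, hψ r, hfs, hfr] at h2
    have h3 := sr_pow_div hmsr d h2
    have := Nat.le_of_dvd (by norm_num) h3
    omega
  · intro h
    have h2 := congrArg ψ h
    rw [map_pow, map_mul, map_one, hψ s, hψ r, hfs, hfr] at h2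
    have h3 := sr_pow_div hmsr d h2
    have := Nat.le_of_dvd (by norm_num) h3
    omega
  · intro h
    have h2 := congrArg ψ h
    rw [map_pow, map_mul, map_one, hψ s, hψ t, hfs, hft] at h2
    have h3 := st_pow_div hmst c h2
    have := Nat.le_of_dvd (by norm_num) h3
    omega
  · intro h
    have h2 := congrArg ψ h
    rw [map_pow, map_mul, map_one, hψ s, hψ t, hfs, hft] at h2
    have h3 := st_pow_div hmst c h2
    have := Nat.le_of_dvd (by norm_num) h3
    omega

end Separation

end
end Stmt8Aux


namespace Stmt8Aux

open CoxeterSystem List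

variable {B : Type*} {W : Type*} [Group W] {M : CoxeterMatrix B} (cs : CoxeterSystem M W)

local prefix:100 "σ" => cs.simple
local prefix:100 "ℓ" => cs.length

/-- Step A : a failure of type A produces a failure of type B of length smaller by 2. -/
lemma stepA {x : W} {r s t : B}
    (E1sr : σ s ≠ σ r) (E2sr : σ s * σ r ≠ σ r * σ s) (E3rs : (σ r * σ s) ^ 3 ≠ 1)
    (E1rt : σ r ≠ σ t)
    (hs : cs.IsRightDescent x s) (ht' : cs.IsRightDescent (x * σ s) t)
    (hr : cs.IsRightDescent x r) :
    (cs.IsRightDescent (x * σ s * σ r) s ∧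
     cs.IsRightDescent (x * σ s * σ r * σ s) r ∧
     cs.IsRightDescent (x * σ s * σ r) t) ∧
    ℓ (x * σ s * σ r) + 2 = ℓ x := by
  have d1 := descent_length cs hs
  have c2 : ℓ (x * σ s * σ r) + 2 = ℓ x := chain2 cs (Ne.symm E1sr) hr hs
  have c3 : ℓ (x * σ s * σ r * σ s) + 3 = ℓ x := chain3 cs E1sr E2sr hs hr
  have c4 : ℓ (x * σ s * σ r * σ s * σ r) + 4 = ℓ x :=
    chain4 cs (Ne.symm E1sr) (fun h => E2sr h.symm) E3rs hr hs
  have hr' : cs.IsRightDescent (x * σ s) r := by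
    show ℓ (x * σ s * σ r) < ℓ (x * σ s)
    omega
  have c2' : ℓ (x * σ s * σ r * σ t) + 2 = ℓ (x * σ s) := chain2 cs (Ne.symm E1rt) ht' hr'
  refine ⟨⟨?_, ?_, ?_⟩, c2⟩
  · show ℓ (x * σ s * σ r * σ s) < ℓ (x * σ s * σ r)
    omega
  · show ℓ (x * σ s * σ r * σ s * σ r) < ℓ (x * σ s * σ r * σ s)
    omega
  · show ℓ (x * σ s * σ r * σ t) < ℓ (x * σ s * σ r)
    omega

/-- Step B : a failure of type B produces a failure of type A of length smaller by 2. -/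
lemma stepB {x : W} {r s t : B}
    (E1st : σ s ≠ σ t) (E2st : σ s * σ t ≠ σ t * σ s) (E3ts : (σ t * σ s) ^ 3 ≠ 1)
    (E1rt : σ r ≠ σ t)
    (hs : cs.IsRightDescent x s) (hr' : cs.IsRightDescent (x * σ s) r)
    (ht : cs.IsRightDescent x t) :
    (cs.IsRightDescent (x * σ s * σ t) s ∧
     cs.IsRightDescent (x * σ s * σ t * σ s) t ∧
     cs.IsRightDescent (x * σ s * σ t) r) ∧
    ℓ (x * σ s * σ t) + 2 = ℓ x := by
  have d1 := descent_length cs hs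
  have c2 : ℓ (x * σ s * σ t) + 2 = ℓ x := chain2 cs (Ne.symm E1st) ht hs
  have c3 : ℓ (x * σ s * σ t * σ s) + 3 = ℓ x := chain3 cs E1st E2st hs ht
  have c4 : ℓ (x * σ s * σ t * σ s * σ t) + 4 = ℓ x :=
    chain4 cs (Ne.symm E1st) (fun h => E2st h.symm) E3ts ht hs
  have ht'' : cs.IsRightDescent (x * σ s) t := by
    show ℓ (x * σ s * σ t) < ℓ (x * σ s)
    omega
  have c2' : ℓ (x * σ s * σ t * σ r) + 2 = ℓ (x * σ s) := chain2 cs E1rt hr' ht''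
  refine ⟨⟨?_, ?_, ?_⟩, c2⟩
  · show ℓ (x * σ s * σ t * σ s) < ℓ (x * σ s * σ t)
    omega
  · show ℓ (x * σ s * σ t * σ s * σ t) < ℓ (x * σ s * σ t * σ s)
    omega
  · show ℓ (x * σ s * σ t * σ r) < ℓ (x * σ s * σ t)
    omega

lemma noFail {r s t : B}
    (E1sr : σ s ≠ σ r) (E2sr : σ s * σ r ≠ σ r * σ s) (E3rs : (σ r * σ s) ^ 3 ≠ 1)
    (E1st : σ s ≠ σ t) (E2st : σ s * σ t ≠ σ t * σ s) (E3ts : (σ t * σ s) ^ 3 ≠ 1)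
    (E1rt : σ r ≠ σ t) :
    ∀ n : ℕ, ∀ x : W, ℓ x ≤ n →
      ¬(cs.IsRightDescent x s ∧ cs.IsRightDescent (x * σ s) t ∧ cs.IsRightDescent x r) ∧
      ¬(cs.IsRightDescent x s ∧ cs.IsRightDescent (x * σ s) r ∧ cs.IsRightDescent x t) := by
  intro n
  induction n with
  | zero =>
    intro x hx
    have hx1 : x = 1 := cs.length_eq_zero_iff.mp (by omega)
    subst hx1
    exact ⟨fun h => cs.not_isRightDescent_one s h.1, fun h => cs.not_isRightDescent_one s h.1⟩
  | succ n ih =>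
    intro x hx
    constructor
    · rintro ⟨hs, ht', hr⟩
      obtain ⟨hFail, hlen⟩ := stepA cs E1sr E2sr E3rs E1rt hs ht' hr
      have h1 : ℓ (x * σ s * σ r) ≤ n := by omega
      exact (ih _ h1).2 ⟨hFail.1, hFail.2.1, hFail.2.2⟩
    · rintro ⟨hs, hr', ht⟩
      obtain ⟨hFail, hlen⟩ := stepB cs E1st E2st E3ts E1rt hs hr' ht
      have h1 : ℓ (x * σ s * σ t) ≤ n := by omega
      exact (ih _ h1).1 ⟨hFail.1, hFail.2.1, hFail.2.2⟩

theorem final (r s t : B)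
    (hrs : r ≠ s) (hrt : r ≠ t) (hst : s ≠ t)
    (hB : ∀ i : B, i = r ∨ i = s ∨ i = t)
    (mrt : M r t = 2) (msr : 5 ≤ M s r) (mst : 4 ≤ M s t) (mstsr : M s t ≤ M s r)
    (w : W) :
    (∀ w₁ : W, w = w₁ * cs.simple t * cs.simple s * cs.simple t →
      cs.length w = cs.length w₁ + 3 → ¬ cs.IsRightDescent w r) ∧
    (∀ w₁ : W, w = w₁ * cs.simple r * cs.simple s * cs.simple r →
      cs.length w = cs.length w₁ + 3 → ¬ cs.IsRightDescent w t) := by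
  obtain ⟨E1sr, E1st, E1rt, E2sr', E3sr', E2st', E3st'⟩ :=
    separation_facts cs r s t hrs hrt hst hB mrt msr mst
  have sqlem : ∀ a b : B, (σ a * σ b) ^ 2 ≠ 1 → σ a * σ b ≠ σ b * σ a := by
    intro a b hsq h
    apply hsq
    rw [pow_two]
    nth_rewrite 2 [h]
    rw [show σ a * σ b * (σ b * σ a) = σ a * (σ b * (σ b * σ a)) by group,
      cs.simple_mul_simple_cancel_left, cs.simple_mul_simple_self]
  have invlem : ∀ a b : B, (σ a * σ b) ^ 3 ≠ 1 → (σ b * σ a) ^ 3 ≠ 1 := by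
    intro a b h3 h
    apply h3
    have hinv : σ a * σ b = (σ b * σ a)⁻¹ := by
      rw [mul_inv_rev, cs.inv_simple, cs.inv_simple]
    rw [hinv, inv_pow, inv_eq_one]
    exact h
  have E2sr : σ s * σ r ≠ σ r * σ s := sqlem s r E2sr'
  have E3rs : (σ r * σ s) ^ 3 ≠ 1 := invlem s r E3sr'
  have E2st : σ s * σ t ≠ σ t * σ s := sqlem s t E2st'
  have E3ts : (σ t * σ s) ^ 3 ≠ 1 := invlem s t E3st'
  have NF := noFail cs E1sr E2sr E3rs E1st E2st E3ts E1rt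
  constructor
  · intro w₁ heq hlen hdesc
    -- length bookkeeping
    have a1 := length_mul_simple_le cs w₁ t
    have a2 := length_mul_simple_le cs (w₁ * σ t) s
    have a3 := length_mul_simple_le cs (w₁ * σ t * σ s) t
    rw [← heq] at a3
    have hx2 : w * σ t = w₁ * σ t * σ s := by
      rw [heq, cs.simple_mul_simple_cancel_right]
    have hb1 : w * σ t * σ s = w₁ * σ t := by
      rw [hx2, cs.simple_mul_simple_cancel_right]
    have hb2 : w * σ t * σ s * σ t = w₁ := by
      rw [hb1, cs.simple_mul_simple_cancel_right]
    have hs : cs.IsRightDescent (w * σ t) s := by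
      show ℓ (w * σ t * σ s) < ℓ (w * σ t)
      rw [hb1, hx2]
      omega
    have ht' : cs.IsRightDescent (w * σ t * σ s) t := by
      show ℓ (w * σ t * σ s * σ t) < ℓ (w * σ t * σ s)
      rw [hb2, hb1]
      omega
    have ht : cs.IsRightDescent w t := by
      show ℓ (w * σ t) < ℓ w
      rw [hx2]
      omega
    have c2 : ℓ (w * σ t * σ r) + 2 = ℓ w := chain2 cs E1rt hdesc ht
    have hrx : cs.IsRightDescent (w * σ t) r := by
      show ℓ (w * σ t * σ r) < ℓ (w * σ t)
      nth_rewrite 2 [hx2]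
      omega
    exact (NF (ℓ (w * σ t)) (w * σ t) le_rfl).1 ⟨hs, ht', hrx⟩
  · intro w₁ heq hlen hdesc
    have a1 := length_mul_simple_le cs w₁ r
    have a2 := length_mul_simple_le cs (w₁ * σ r) s
    have a3 := length_mul_simple_le cs (w₁ * σ r * σ s) r
    rw [← heq] at a3
    have hx2 : w * σ r = w₁ * σ r * σ s := by
      rw [heq, cs.simple_mul_simple_cancel_right]
    have hb1 : w * σ r * σ s = w₁ * σ r := by
      rw [hx2, cs.simple_mul_simple_cancel_right]
    have hb2 : w * σ r * σ s * σ r = w₁ := by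
      rw [hb1, cs.simple_mul_simple_cancel_right]
    have hs : cs.IsRightDescent (w * σ r) s := by
      show ℓ (w * σ r * σ s) < ℓ (w * σ r)
      rw [hb1, hx2]
      omega
    have hr' : cs.IsRightDescent (w * σ r * σ s) r := by
      show ℓ (w * σ r * σ s * σ r) < ℓ (w * σ r * σ s)
      rw [hb2, hb1]
      omega
    have hr : cs.IsRightDescent w r := by
      show ℓ (w * σ r) < ℓ w
      rw [hx2]
      omega
    have c2 : ℓ (w * σ r * σ t) + 2 = ℓ w := chain2 cs (Ne.symm E1rt) hdesc hr
    have htx : cs.IsRightDescent (w * σ r) t := by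
      show ℓ (w * σ r * σ t) < ℓ (w * σ r)
      nth_rewrite 2 [hx2]
      omega
    exact (NF (ℓ (w * σ r)) (w * σ r) le_rfl).2 ⟨hs, hr', htx⟩

end Stmt8Aux

/-- if w = w₁·tst then r ∉ R(w); if w = w₁·rsr then t ∉ R(w). -/
theorem stmt8 {B : Type*} {W : Type*} [Group W] {M : CoxeterMatrix B}
    (cs : CoxeterSystem M W) (r s t : B)
    (hrs : r ≠ s) (hrt : r ≠ t) (hst : s ≠ t)
    (hB : ∀ i : B, i = r ∨ i = s ∨ i = t)
    (mrt : M r t = 2) (msr : 5 ≤ M s r) (mst : 4 ≤ M s t) (mstsr : M s t ≤ M s r)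
    (w : W) :
    (∀ w₁ : W, w = w₁ * cs.simple t * cs.simple s * cs.simple t → cs.length w = cs.length w₁ + 3 →
      ¬ cs.IsRightDescent w r) ∧
    (∀ w₁ : W, w = w₁ * cs.simple r * cs.simple s * cs.simple r → cs.length w = cs.length w₁ + 3 →
      ¬ cs.IsRightDescent w t) :=
  Stmt8Aux.final cs r s t hrs hrt hst hB mrt msr mst mstsr w
end

section
/- There exist no w, w₁, w₂ ∈ W such that w = w₁st with ℓ(w) = ℓ(w₁) + 2 and simultaneously w = w₂sr with ℓ(w) = ℓ(w₂) + 2. -/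
noncomputable section
namespace Stmt16

open Real List

set_option linter.unusedSectionVars false

variable {B : Type*} [Fintype B] [DecidableEq B]

/-- entries of the cosine bilinear form -/
def Cf (M : CoxeterMatrix B) (i j : B) : ℝ := - Real.cos (Real.pi / (M i j))

lemma Cf_diag (M : CoxeterMatrix B) (i : B) : Cf M i i = 1 := by
  simp [Cf, M.diagonal i]

lemma Cf_symm (M : CoxeterMatrix B) (i j : B) : Cf M i j = Cf M j i := by
  rw [Cf, Cf, M.symmetric]

/-- basis vector -/
def av (i : B) : B → ℝ := fun j => if j = i then 1 else 0

lemma av_apply_self (i : B) : av i i = (1:ℝ) := by simp [av]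

lemma av_apply_ne {i j : B} (h : j ≠ i) : av i j = (0:ℝ) := by simp [av, h]

/-- the linear functional `v ↦ B(αᵢ, v)` -/
def bf (M : CoxeterMatrix B) (i : B) : (B → ℝ) →ₗ[ℝ] ℝ where
  toFun v := ∑ j, v j * Cf M i j
  map_add' u v := by simp [add_mul, Finset.sum_add_distrib]
  map_smul' c v := by simp [Finset.mul_sum, mul_assoc]

lemma bf_av (M : CoxeterMatrix B) (i j : B) : bf M i (av j) = Cf M i j := by
  simp [bf, av]

/-- the bilinear form -/
def Bl (M : CoxeterMatrix B) (u v : B → ℝ) : ℝ := ∑ i, u i * bf M i v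

lemma Bl_av_left (M : CoxeterMatrix B) (i : B) (v : B → ℝ) : Bl M (av i) v = bf M i v := by
  simp [Bl, av]

lemma Bl_symm (M : CoxeterMatrix B) (u v : B → ℝ) : Bl M u v = Bl M v u := by
  simp only [Bl, bf, LinearMap.coe_mk, AddHom.coe_mk, Finset.mul_sum]
  rw [Finset.sum_comm]
  apply Finset.sum_congr rfl; intro i _
  apply Finset.sum_congr rfl; intro j _
  rw [Cf_symm]; ring

lemma Bl_av_right (M : CoxeterMatrix B) (u : B → ℝ) (j : B) : Bl M u (av j) = ∑ i, u i * Cf M i j := by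
  simp [Bl, bf_av]

lemma Bl_add_left (M : CoxeterMatrix B) (u u' v : B → ℝ) :
    Bl M (u + u') v = Bl M u v + Bl M u' v := by
  simp [Bl, add_mul, Finset.sum_add_distrib]

lemma Bl_smul_left (M : CoxeterMatrix B) (c : ℝ) (u v : B → ℝ) :
    Bl M (c • u) v = c * Bl M u v := by
  simp [Bl, Finset.mul_sum, mul_assoc]

lemma Bl_sub_left (M : CoxeterMatrix B) (u u' v : B → ℝ) :
    Bl M (u - u') v = Bl M u v - Bl M u' v := by
  simp [Bl, sub_mul, Finset.sum_sub_distrib]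

lemma Bl_add_right (M : CoxeterMatrix B) (u v v' : B → ℝ) :
    Bl M u (v + v') = Bl M u v + Bl M u v' := by
  simp [Bl, mul_add, Finset.sum_add_distrib]

lemma Bl_smul_right (M : CoxeterMatrix B) (c : ℝ) (u v : B → ℝ) :
    Bl M u (c • v) = c * Bl M u v := by
  simp [Bl, Finset.mul_sum]; ring_nf
  apply Finset.sum_congr rfl; intro i _; ring

lemma Bl_sub_right (M : CoxeterMatrix B) (u v v' : B → ℝ) :
    Bl M u (v - v') = Bl M u v - Bl M u v' := by
  simp [Bl, mul_sub, Finset.sum_sub_distrib]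

/-- the reflection σᵢ -/
def sig (M : CoxeterMatrix B) (i : B) : Module.End ℝ (B → ℝ) where
  toFun v := v - (2 * bf M i v) • av i
  map_add' u v := by simp [mul_add, add_smul]; abel
  map_smul' c v := by simp [smul_smul]; module

lemma sig_apply (M : CoxeterMatrix B) (i : B) (v : B → ℝ) :
    sig M i v = v - (2 * bf M i v) • av i := rfl

lemma sig_av_self (M : CoxeterMatrix B) (i : B) : sig M i (av i) = - av i := by
  rw [sig_apply, bf_av, Cf_diag]; module

lemma sig_av (M : CoxeterMatrix B) (i j : B) :
    sig M i (av j) = av j - (2 * Cf M i j) • av i := by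
  rw [sig_apply, bf_av]

lemma bf_sig (M : CoxeterMatrix B) (i : B) (v : B → ℝ) :
    bf M i (sig M i v) = - bf M i v := by
  rw [sig_apply, map_sub, map_smul, bf_av, Cf_diag]; simp; ring

lemma sig_sig (M : CoxeterMatrix B) (i : B) (v : B → ℝ) : sig M i (sig M i v) = v := by
  rw [sig_apply (v := sig M i v), bf_sig, sig_apply]; module

lemma sig_sq (M : CoxeterMatrix B) (i : B) : sig M i * sig M i = 1 := by
  apply LinearMap.ext; intro v
  exact sig_sig M i v

lemma Bl_sig_invariant (M : CoxeterMatrix B) (i : B) (u v : B → ℝ) :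
    Bl M (sig M i u) (sig M i v) = Bl M u v := by
  have h1 : Bl M u (av i) = bf M i u := by rw [Bl_symm, Bl_av_left]
  have h2 : Bl M (av i) (av i) = (1:ℝ) := by rw [Bl_av_left, bf_av, Cf_diag]
  simp only [sig_apply, Bl_sub_left, Bl_sub_right, Bl_smul_left, Bl_smul_right, Bl_av_left,
    h1, h2]
  ring

/-! ### Alternating products and the dihedral relations -/

section Pair

variable (M : CoxeterMatrix B) (i j : B)

/-- endomorphism of the alternating word `alternatingWord i j n` (front-cons convention) -/
def T : ℕ → Module.End ℝ (B → ℝ)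
  | 0 => 1
  | n+1 => (if Even n then sig M j else sig M i) * T n

lemma T_succ (n : ℕ) : T M i j (n+1) = (if Even n then sig M j else sig M i) * T M i j n := rfl

lemma T_two_mul (k : ℕ) : T M i j (2 * k) = (sig M i * sig M j) ^ k := by
  induction k with
  | zero => simp [T]
  | succ k ih =>
      have h1 : 2 * (k+1) = (2*k + 1) + 1 := by ring
      rw [h1, T_succ, T_succ, ih]
      have he : ¬ Even (2*k+1) := by simp [parity_simps]
      have he2 : Even (2*k) := even_two_mul k
      rw [if_neg he, if_pos he2, ← mul_assoc, ← pow_succ']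

end Pair

/-! ### trigonometry -/

/-- θ = π / m -/
def thv (m : ℕ) : ℝ := Real.pi / m

lemma thv_pos {m : ℕ} (hm2 : 1 ≤ m) : 0 < thv m := by
  have : (0:ℝ) < m := by exact_mod_cast Nat.lt_of_lt_of_le Nat.zero_lt_one hm2
  exact div_pos Real.pi_pos this

lemma thv_le {m : ℕ} (hm2 : 1 ≤ m) : thv m ≤ Real.pi := by
  have h0 : (1:ℝ) ≤ m := by exact_mod_cast hm2
  rw [thv, div_le_iff₀ (by linarith)]
  nlinarith [Real.pi_pos]

lemma sin_thv_pos {m : ℕ} (hm2 : 2 ≤ m) : 0 < Real.sin (thv m) := by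
  apply Real.sin_pos_of_pos_of_lt_pi (thv_pos (by omega))
  have h2 : (2:ℝ) ≤ m := by exact_mod_cast hm2
  rw [thv, div_lt_iff₀ (by linarith)]
  nlinarith [Real.pi_pos]

lemma mul_thv {m : ℕ} (hm : 1 ≤ m) : (m : ℝ) * thv m = Real.pi := by
  have hm0 : (m:ℝ) ≠ 0 := by exact_mod_cast (by omega : m ≠ 0)
  rw [thv, mul_div_cancel₀ _ hm0]

lemma sin_rec (x th : ℝ) : Real.sin (x + 2*th) = 2 * Real.cos th * Real.sin (x + th) - Real.sin x := by
  have h1 : x + 2*th = (x + th) + th := by ring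
  have h2 : Real.sin ((x+th) - th) = Real.sin (x+th) * Real.cos th - Real.cos (x+th) * Real.sin th :=
    Real.sin_sub _ _
  have h3 : (x + th) - th = x := by ring
  rw [h3] at h2
  rw [h1, Real.sin_add, h2]
  ring

/-! ### coefficient sequences -/

/-- coefficient of `av i` in `T n (av i)` -/
def fseq (m n : ℕ) : ℝ :=
  if Even n then Real.sin ((n+1) * thv m) / Real.sin (thv m)
  else Real.sin (n * thv m) / Real.sin (thv m)

/-- coefficient of `av j` in `T n (av i)` -/
def gseq (m n : ℕ) : ℝ :=
  if Even n then Real.sin (n * thv m) / Real.sin (thv m)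
  else Real.sin ((n+1) * thv m) / Real.sin (thv m)

section Pair2

variable (M : CoxeterMatrix B) (i j : B)

lemma T_av (hij : i ≠ j) (hm2 : 2 ≤ M i j) (n : ℕ) :
    T M i j n (av i) = fseq (M i j) n • av i + gseq (M i j) n • av j := by
  set m := M i j with hmdef
  have hs : Real.sin (thv m) ≠ 0 := ne_of_gt (sin_thv_pos hm2)
  have hCji : Cf M j i = - Real.cos (thv m) := by
    rw [Cf, M.symmetric, ← hmdef, thv]
  have hCij : Cf M i j = - Real.cos (thv m) := by rw [Cf, ← hmdef, thv]
  induction n with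
  | zero =>
      simp [T, fseq, gseq, div_self hs]
  | succ n ih =>
      rw [T_succ, Module.End.mul_apply, ih]
      by_cases he : Even n
      · rw [if_pos he, map_add, map_smul, map_smul, sig_av, sig_av_self]
        have hf : fseq m (n+1) = fseq m n := by
          have : ¬ Even (n+1) := by simpa [parity_simps] using he
          rw [fseq, fseq, if_pos he, if_neg this]
          push_cast; ring_nf
        have hg : gseq m (n+1) = 2 * Real.cos (thv m) * fseq m n - gseq m n := by
          have hne : ¬ Even (n+1) := by simpa [parity_simps] using he
          rw [gseq, gseq, fseq, if_pos he, if_neg hne, if_pos he]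
          push_cast
          have harg : ((n:ℝ)+1+1) * thv m = (n:ℝ) * thv m + 2 * thv m := by ring
          rw [harg, sin_rec]
          have : ((n:ℝ)+1) * thv m = (n:ℝ) * thv m + thv m := by ring
          rw [this]
          field_simp
          try ring
        rw [hf, hg, hCji]
        module
      · rw [if_neg he, map_add, map_smul, map_smul, sig_av_self, sig_av M i j]
        have hf : fseq m (n+1) = 2 * Real.cos (thv m) * gseq m n - fseq m n := by
          have hev : Even (n+1) := by simpa [parity_simps] using he
          rw [fseq, fseq, gseq, if_pos hev, if_neg he, if_neg he]
          push_cast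
          have harg : ((n:ℝ)+1+1) * thv m = (n:ℝ) * thv m + 2 * thv m := by ring
          rw [harg, sin_rec]
          have : ((n:ℝ)+1) * thv m = (n:ℝ) * thv m + thv m := by ring
          rw [this]
          field_simp
          try ring
        have hg : gseq m (n+1) = gseq m n := by
          have hev : Even (n+1) := by simpa [parity_simps] using he
          rw [gseq, gseq, if_pos hev, if_neg he]
          push_cast; ring_nf
        rw [hf, hg, hCij]
        module

end Pair2

lemma fseq_two_mul_M {m : ℕ} (hm2 : 2 ≤ m) : fseq m (2 * m) = 1 := by
  have hs : Real.sin (thv m) ≠ 0 := ne_of_gt (sin_thv_pos hm2)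
  have he : Even (2 * m) := even_two_mul m
  rw [fseq, if_pos he]
  have harg : (((2 * m : ℕ) : ℝ) + 1) * thv m = thv m + 2 * Real.pi := by
    push_cast
    linear_combination 2 * mul_thv (by omega : 1 ≤ m)
  rw [harg, Real.sin_add_two_pi, div_self hs]

lemma gseq_two_mul_M {m : ℕ} (hm2 : 2 ≤ m) : gseq m (2 * m) = 0 := by
  have he : Even (2 * m) := even_two_mul m
  rw [gseq, if_pos he]
  have harg : (((2 * m : ℕ) : ℝ)) * thv m = 2 * Real.pi := by
    push_cast
    linear_combination 2 * mul_thv (by omega : 1 ≤ m)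
  rw [harg, Real.sin_two_pi, zero_div]

section Pair3

variable (M : CoxeterMatrix B) (i j : B)

lemma pow_av_self (hij : i ≠ j) (hm2 : 2 ≤ M i j) :
    ((sig M i * sig M j) ^ (M i j)) (av i) = av i := by
  have h := T_av M i j hij hm2 (2 * M i j)
  rw [T_two_mul] at h
  rw [h, fseq_two_mul_M hm2, gseq_two_mul_M hm2]
  module

lemma pow_cancel (k : ℕ) :
    (sig M j * sig M i) ^ k * (sig M i * sig M j) ^ k = 1 := by
  induction k with
  | zero => simp
  | succ k ih =>
      have hmid : (sig M j * sig M i) * (sig M i * sig M j) = 1 := by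
        calc (sig M j * sig M i) * (sig M i * sig M j)
            = sig M j * ((sig M i * sig M i) * sig M j) := by simp only [mul_assoc]
          _ = sig M j * sig M j := by rw [sig_sq, one_mul]
          _ = 1 := sig_sq M j
      rw [pow_succ, pow_succ', mul_assoc, ← mul_assoc (sig M j * sig M i), hmid, one_mul, ih]

lemma pow_av_other (hij : i ≠ j) (hm2 : 2 ≤ M i j) :
    ((sig M i * sig M j) ^ (M i j)) (av j) = av j := by
  have hs : M j i = M i j := M.symmetric j i
  have h1 : ((sig M j * sig M i) ^ (M i j)) (av j) = av j := by
    have h := pow_av_self M j i hij.symm (by omega : 2 ≤ M j i)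
    rwa [hs] at h
  calc ((sig M i * sig M j) ^ (M i j)) (av j)
      = ((sig M i * sig M j) ^ (M i j)) (((sig M j * sig M i) ^ (M i j)) (av j)) := by rw [h1]
    _ = (((sig M i * sig M j) ^ (M i j)) * ((sig M j * sig M i) ^ (M i j))) (av j) := by
        rw [Module.End.mul_apply]
    _ = av j := by rw [pow_cancel M j i]; rfl

lemma pow_fixed (φ : Module.End ℝ (B → ℝ)) (x : B → ℝ) (hx : φ x = x) (n : ℕ) :
    (φ ^ n) x = x := by
  induction n with
  | zero => rfl
  | succ n ih => rw [pow_succ', Module.End.mul_apply, ih, hx]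

lemma eq_sum_av (v : B → ℝ) : v = ∑ k, v k • av k := by
  funext q
  simp [av, Finset.sum_ite_eq']

lemma pair_pow_eq_one (l : B) (hij : i ≠ j) (hli : l ≠ i) (hlj : l ≠ j)
    (hm2 : 2 ≤ M i j) (hall : ∀ k : B, k = i ∨ k = j ∨ k = l) :
    (sig M i * sig M j) ^ (M i j) = 1 := by
  set c : ℝ := Real.cos (thv (M i j)) with hc
  have hCij : Cf M i j = -c := rfl
  have hθpos : 0 < thv (M i j) := thv_pos (by omega)
  have hθle : thv (M i j) ≤ Real.pi / 2 := by
    rw [thv]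
    rw [div_le_div_iff₀ (by exact_mod_cast (by omega : 0 < M i j)) (by norm_num)]
    have : (2:ℝ) ≤ M i j := by exact_mod_cast hm2
    nlinarith [Real.pi_pos]
  have hc0 : 0 ≤ c := Real.cos_nonneg_of_mem_Icc ⟨by linarith, hθle⟩
  have hc1 : c < 1 := by
    have h := Real.cos_lt_cos_of_nonneg_of_le_pi le_rfl
      (le_trans hθle (by linarith [Real.pi_pos])) hθpos
    simpa using h
  have hden : 1 - c^2 ≠ 0 := by nlinarith
  set a : ℝ := -(Cf M i l + c * Cf M j l)/(1 - c^2) with ha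
  set b : ℝ := -(Cf M j l + c * Cf M i l)/(1 - c^2) with hb
  set x : B → ℝ := av l + a • av i + b • av j with hx
  have hbix : bf M i x = 0 := by
    rw [hx]
    simp only [map_add, map_smul, bf_av, smul_eq_mul]
    rw [Cf_diag, hCij, Cf_symm M i l, ← Cf_symm M i l]
    rw [ha, hb]
    field_simp
    ring
  have hbjx : bf M j x = 0 := by
    rw [hx]
    simp only [map_add, map_smul, bf_av, smul_eq_mul]
    rw [Cf_diag, Cf_symm M j i, hCij]
    rw [ha, hb]
    field_simp
    ring
  have hsix : sig M i x = x := by rw [sig_apply, hbix]; simp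
  have hsjx : sig M j x = x := by rw [sig_apply, hbjx]; simp
  have hFx : (sig M i * sig M j) x = x := by
    rw [Module.End.mul_apply, hsjx, hsix]
  have hpow : ∀ k : B, ((sig M i * sig M j) ^ (M i j)) (av k) = av k := by
    intro k
    rcases hall k with hk | hk | hk
    · rw [hk]; exact pow_av_self M i j hij hm2
    · rw [hk]; exact pow_av_other M i j hij hm2
    · rw [hk]
      have hxl : av l = x - a • av i - b • av j := by rw [hx]; abel
      rw [hxl, map_sub, map_sub, map_smul, map_smul,
        pow_fixed _ x hFx, pow_av_self M i j hij hm2, pow_av_other M i j hij hm2]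
  apply LinearMap.ext
  intro v
  have hv := eq_sum_av v
  rw [hv, map_sum, map_sum]
  apply Finset.sum_congr rfl
  intro k _
  rw [map_smul, map_smul, hpow k, Module.End.one_apply]

end Pair3

/-! ### Positivity machinery over a Coxeter system -/

section Cox

open CoxeterSystem

variable {W : Type*} [Group W] {M : CoxeterMatrix B} (cs : CoxeterSystem M W)

local prefix:100 "ℒ" => cs.length
local prefix:100 "ψ" => cs.wordProd

/-- peeling/extension of alternating words -/
lemma mul_alt (i j x : B) (hij : i ≠ j) (hm2 : 2 ≤ M i j) (hx : x = i ∨ x = j) (n : ℕ)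
    (hn : n ≤ M i j) :
    ∃ n', n' ≤ M i j ∧ n' ≤ n + 1 ∧
      (cs.simple x * ψ (alternatingWord i j n) = ψ (alternatingWord i j n') ∨
       cs.simple x * ψ (alternatingWord i j n) = ψ (alternatingWord j i n')) := by
  rcases Nat.eq_zero_or_pos n with rfl | hn1
  · rcases hx with rfl | rfl
    · refine ⟨1, by omega, by omega, Or.inr ?_⟩
      simp [alternatingWord]
    · refine ⟨1, by omega, by omega, Or.inl ?_⟩
      simp [alternatingWord]
  · -- n ≥ 1
    have hsucc : alternatingWord i j n = (if Even (n-1) then j else i) :: alternatingWord i j (n-1) := by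
      have : n = (n-1) + 1 := by omega
      rw [this, alternatingWord_succ' i j (n-1)]
      congr 1 <;> omega
    set z : B := if Even (n-1) then j else i with hz
    by_cases hxz : x = z
    · -- peel
      refine ⟨n - 1, by omega, by omega, Or.inl ?_⟩
      rw [hsucc, wordProd_cons, hxz, hz, ← mul_assoc]
      rcases ite_eq_or_eq (Even (n-1)) j i with h | h <;>
        rw [h] <;> simp [cs.simple_mul_simple_self]
    · -- x is the other letter
      have hpar : Even (n-1) ↔ ¬ Even n := by
        rw [Nat.even_sub (by omega : 1 ≤ n)]
        simp
      have hxy : x = (if Even n then j else i) := by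
        by_cases he : Even n
        · have hz' : z = i := by rw [hz, if_neg (by simp [hpar, he])]
          rw [if_pos he]
          rcases hx with h | h
          · exact absurd (h.trans hz'.symm) hxz
          · exact h
        · have hz' : z = j := by rw [hz, if_pos (hpar.mpr he)]
          rw [if_neg he]
          rcases hx with h | h
          · exact h
          · exact absurd (h.trans hz'.symm) hxz
      rcases Nat.lt_or_ge n (M i j) with hlt | hge
      · -- extend
        refine ⟨n + 1, by omega, by omega, Or.inl ?_⟩
        rw [alternatingWord_succ' i j n, wordProd_cons, ← hxy]
      · -- n = M i j : braid flip then peel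
        have hnM : n = M i j := le_antisymm hn hge
        have hbraid : ψ (alternatingWord i j n) = ψ (alternatingWord j i n) := by
          have h := cs.prod_alternatingWord_eq_prod_alternatingWord_sub i j n
            (by omega : n ≤ M i j * 2)
          have h2 : M i j * 2 - n = n := by omega
          rw [h, h2]
        have hsucc' : alternatingWord j i n = (if Even (n-1) then i else j) :: alternatingWord j i (n-1) := by
          have : n = (n-1) + 1 := by omega
          rw [this, alternatingWord_succ' j i (n-1)]
          congr 1 <;> omega
        have hxz' : x = (if Even (n-1) then i else j) := by
          by_cases he : Even n
          · rw [hxy, if_pos he, if_neg (by simp [hpar, he])]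
          · rw [hxy, if_neg he, if_pos (hpar.mpr he)]
        refine ⟨n - 1, by omega, by omega, Or.inr ?_⟩
        rw [hbraid, hsucc', wordProd_cons, ← mul_assoc, ← hxz']
        simp [cs.simple_mul_simple_self]

/-- dihedral normal form -/
lemma nfl (i j : B) (hij : i ≠ j) (hm2 : 2 ≤ M i j) :
    ∀ ω : List B, (∀ x ∈ ω, x = i ∨ x = j) →
    ∃ n, n ≤ M i j ∧ n ≤ ω.length ∧
      (ψ ω = ψ (alternatingWord i j n) ∨ ψ ω = ψ (alternatingWord j i n)) := by
  intro ω
  induction ω with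
  | nil =>
      intro _
      exact ⟨0, by omega, by simp, Or.inl rfl⟩
  | cons x ω ih =>
      intro hmem
      obtain ⟨n, hnM, hnlen, hcase⟩ := ih (fun y hy => hmem y (List.mem_cons_of_mem _ hy))
      have hx := hmem x List.mem_cons_self
      rw [wordProd_cons]
      rcases hcase with h | h
      · obtain ⟨n', hn'M, hn'le, hc⟩ := mul_alt cs i j x hij hm2 hx n hnM
        rw [h]
        exact ⟨n', hn'M, by simp; omega, hc⟩
      · have hm2' : 2 ≤ M j i := by rw [M.symmetric]; exact hm2
        obtain ⟨n', hn'M, hn'le, hc⟩ := mul_alt cs j i x hij.symm hm2' hx.symm n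
          (by rw [M.symmetric]; exact hnM)
        rw [h]
        refine ⟨n', by rw [M.symmetric i j]; exact hn'M, by simp; omega, ?_⟩
        tauto

/-- descent stripping -/
lemma strip (i j : B) : ∀ N : ℕ, ∀ w : W, ℒ w ≤ N →
    ∃ u : W, ∃ ωd : List B, (∀ x ∈ ωd, x = i ∨ x = j) ∧ w = u * ψ ωd ∧
      ℒ w = ℒ u + ωd.length ∧
      ℒ (u * cs.simple i) = ℒ u + 1 ∧ ℒ (u * cs.simple j) = ℒ u + 1 := by
  intro N
  induction N with
  | zero =>
      intro w hw
      have hw0 : ℒ w = 0 := by omega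
      have hw1 : w = 1 := cs.length_eq_zero_iff.mp hw0
      refine ⟨w, [], by simp, by simp, by simp, ?_, ?_⟩
      · rcases cs.length_mul_simple w i with h | h
        · exact h
        · rw [hw1] at h ⊢
          simp only [cs.length_one] at h ⊢
          omega
      · rcases cs.length_mul_simple w j with h | h
        · exact h
        · rw [hw1] at h ⊢
          simp only [cs.length_one] at h ⊢
          omega
  | succ N ih =>
      intro w hw
      by_cases hi : ℒ (w * cs.simple i) = ℒ w + 1
      · by_cases hj : ℒ (w * cs.simple j) = ℒ w + 1
        · exact ⟨w, [], by simp, by simp, by simp, hi, hj⟩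
        · have hj' : ℒ (w * cs.simple j) + 1 = ℒ w := (cs.length_mul_simple w j).resolve_left hj
          obtain ⟨u, ωd, h1, h2, h3, h4, h5⟩ := ih (w * cs.simple j) (by omega)
          refine ⟨u, ωd ++ [j], ?_, ?_, ?_, h4, h5⟩
          · intro x hxm
            rcases List.mem_append.mp hxm with hh | hh
            · exact h1 x hh
            · right; simpa using hh
          · rw [wordProd_append, wordProd_singleton, ← mul_assoc, ← h2,
              cs.simple_mul_simple_cancel_right]
          · simp only [List.length_append, List.length_singleton]
            omega
      · have hi' : ℒ (w * cs.simple i) + 1 = ℒ w := (cs.length_mul_simple w i).resolve_left hi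
        obtain ⟨u, ωd, h1, h2, h3, h4, h5⟩ := ih (w * cs.simple i) (by omega)
        refine ⟨u, ωd ++ [i], ?_, ?_, ?_, h4, h5⟩
        · intro x hxm
          rcases List.mem_append.mp hxm with hh | hh
          · exact h1 x hh
          · left; simpa using hh
        · rw [wordProd_append, wordProd_singleton, ← mul_assoc, ← h2,
            cs.simple_mul_simple_cancel_right]
        · simp only [List.length_append, List.length_singleton]
          omega

/-! ### the geometric representation as a homomorphism -/

variable (Φ : W →* Module.End ℝ (B → ℝ))

/-- positivity of a vector -/
def PosV (v : B → ℝ) : Prop := (∀ q, 0 ≤ v q) ∧ v ≠ 0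

/-- negativity of a vector -/
def NegV (v : B → ℝ) : Prop := (∀ q, v q ≤ 0) ∧ v ≠ 0

lemma PosV.exists_pos {v : B → ℝ} (h : PosV v) : ∃ q, 0 < v q := by
  rcases Function.ne_iff.mp h.2 with ⟨q, hq⟩
  exact ⟨q, lt_of_le_of_ne (h.1 q) (by simpa [eq_comm] using hq)⟩

lemma NegV.exists_neg {v : B → ℝ} (h : NegV v) : ∃ q, v q < 0 := by
  rcases Function.ne_iff.mp h.2 with ⟨q, hq⟩
  exact ⟨q, lt_of_le_of_ne (h.1 q) (by simpa using hq)⟩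

lemma not_pos_and_neg {v : B → ℝ} (h : PosV v) (h' : NegV v) : False := by
  obtain ⟨q, hq⟩ := h.exists_pos
  linarith [h'.1 q]

lemma pos_av (i : B) : PosV (av i) := by
  constructor
  · intro q
    by_cases h : q = i <;> simp [av, h]
  · intro hc
    have := congrFun hc i
    simp [av] at this

lemma pos_combo {A C : B → ℝ} (hA : PosV A) (hC : PosV C) {f g : ℝ}
    (hf : 0 ≤ f) (hg : 0 ≤ g) (hfg : 0 < f ∨ 0 < g) :
    PosV (f • A + g • C) := by
  constructor
  · intro q
    have := hA.1 q
    have := hC.1 q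
    simp only [Pi.add_apply, Pi.smul_apply, smul_eq_mul]
    nlinarith
  · rcases hfg with hf' | hg'
    · obtain ⟨q, hq⟩ := hA.exists_pos
      intro hc
      have := congrFun hc q
      simp only [Pi.add_apply, Pi.smul_apply, smul_eq_mul, Pi.zero_apply] at this
      nlinarith [hC.1 q]
    · obtain ⟨q, hq⟩ := hC.exists_pos
      intro hc
      have := congrFun hc q
      simp only [Pi.add_apply, Pi.smul_apply, smul_eq_mul, Pi.zero_apply] at this
      nlinarith [hA.1 q]

/-- `Φ` of an alternating word is `T` -/
lemma Phi_alt (hΦ : ∀ k : B, Φ (cs.simple k) = sig M k) (i j : B) (n : ℕ) :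
    Φ (ψ (alternatingWord i j n)) = T M i j n := by
  induction n with
  | zero => simp [T, alternatingWord]
  | succ n ih =>
      rw [alternatingWord_succ', wordProd_cons, map_mul, ih, T_succ]
      by_cases he : Even n <;> simp [he, hΦ]

/-- nonnegativity of coefficients -/
lemma fg_nonneg {m n : ℕ} (hm2 : 2 ≤ m) (h1 : 1 ≤ n) (hn : n < m) :
    0 ≤ fseq m n ∧ 0 ≤ gseq m n ∧ (0 < fseq m n ∨ 0 < gseq m n) := by
  have hsp : 0 < Real.sin (thv m) := sin_thv_pos hm2
  have hθp : 0 < thv m := thv_pos (by omega)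
  have hmθ : (m:ℝ) * thv m = Real.pi := mul_thv (by omega)
  have hnm : (n:ℝ) ≤ (m:ℝ) := by exact_mod_cast le_of_lt hn
  have hn1m : ((n:ℝ)+1) ≤ (m:ℝ) := by
    have : (n+1 : ℕ) ≤ m := by omega
    exact_mod_cast this
  have hs1 : 0 < Real.sin ((n:ℝ) * thv m) := by
    apply Real.sin_pos_of_pos_of_lt_pi
    · have : (0:ℝ) < n := by exact_mod_cast h1
      positivity
    · calc (n:ℝ) * thv m < (m:ℝ) * thv m := by
            apply mul_lt_mul_of_pos_right _ hθp
            exact_mod_cast hn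
        _ = Real.pi := hmθ
  have hs2 : 0 ≤ Real.sin (((n:ℝ)+1) * thv m) := by
    apply Real.sin_nonneg_of_nonneg_of_le_pi
    · positivity
    · calc ((n:ℝ)+1) * thv m ≤ (m:ℝ) * thv m := by
            apply mul_le_mul_of_nonneg_right hn1m (le_of_lt hθp)
        _ = Real.pi := hmθ
  by_cases he : Even n
  · refine ⟨by rw [fseq, if_pos he]; positivity, by rw [gseq, if_pos he]; positivity, ?_⟩
    right
    rw [gseq, if_pos he]
    positivity
  · refine ⟨by rw [fseq, if_neg he]; positivity, by rw [gseq, if_neg he]; positivity, ?_⟩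
    left
    rw [fseq, if_neg he]
    positivity

/-- THE POSITIVITY THEOREM -/
theorem posMain (hΦ : ∀ k : B, Φ (cs.simple k) = sig M k)
    (hM2 : ∀ p q : B, p ≠ q → 2 ≤ M p q) :
    ∀ N : ℕ, ∀ w : W, ∀ i : B, ℒ w ≤ N → ℒ (w * cs.simple i) = ℒ w + 1 →
      PosV (Φ w (av i)) := by
  intro N
  induction N with
  | zero =>
      intro w i hw _
      have hw1 : w = 1 := cs.length_eq_zero_iff.mp (by omega)
      rw [hw1, map_one]
      exact pos_av i
  | succ N ih =>
      intro w i hwN hlen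
      by_cases hw1 : w = 1
      · rw [hw1, map_one]; exact pos_av i
      · obtain ⟨j, hj⟩ := cs.exists_rightDescent_of_ne_one hw1
        rw [CoxeterSystem.IsRightDescent] at hj
        have hij : j ≠ i := by
          rintro rfl
          omega
        obtain ⟨u, ωd, hmem, hwu, hlen2, hui, huj⟩ :=
          strip cs i j (N+1) w hwN
        have hm2 : 2 ≤ M i j := hM2 i j (Ne.symm hij)
        have hne : ωd.length ≠ 0 := by
          intro h0
          rw [List.length_eq_zero_iff.mp h0] at hwu
          simp at hwu
          rw [hwu] at hj
          omega
        have huN : ℒ u ≤ N := by omega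
        obtain ⟨n, hnM, hnlen, hcase⟩ := nfl cs i j (Ne.symm hij) hm2 ωd hmem
        have hn0 : n ≠ 0 := by
          intro h0
          subst h0
          have : ψ ωd = 1 := by
            rcases hcase with h | h <;> simpa [alternatingWord] using h
          rw [this, mul_one] at hwu
          rw [hwu] at hj
          omega
        -- key length bound tool
        have hlb : ∀ k : ℕ, ℒ (u * ψ (alternatingWord i j k)) ≤ ℒ u + k := by
          intro k
          calc ℒ (u * ψ (alternatingWord i j k))
              ≤ ℒ u + ℒ (ψ (alternatingWord i j k)) := cs.length_mul_le _ _
            _ ≤ ℒ u + k := by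
                have := cs.length_wordProd_le (alternatingWord i j k)
                rw [length_alternatingWord] at this
                omega
        rcases hcase with hform | hform
        · -- ends in j
          rcases Nat.lt_or_ge n (M i j) with hlt | hge
          · -- the good case
            have hΦw : Φ w (av i) =
                fseq (M i j) n • (Φ u (av i)) + gseq (M i j) n • (Φ u (av j)) := by
              rw [hwu, hform, map_mul, Module.End.mul_apply, Phi_alt cs Φ hΦ i j n,
                T_av M i j (Ne.symm hij) hm2 n, map_add, map_smul, map_smul]
            obtain ⟨hf0, hg0, hfg⟩ := fg_nonneg (m := M i j) hm2 (by omega) hlt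
            rw [hΦw]
            exact pos_combo (ih u i huN hui) (ih u j huN huj) hf0 hg0 hfg
          · -- n = M i j: flip and contradict
            exfalso
            have hnM' : n = M i j := le_antisymm hnM hge
            have hbraid : ψ (alternatingWord i j n) = ψ (alternatingWord j i n) := by
              have h := cs.prod_alternatingWord_eq_prod_alternatingWord_sub i j n
                (by omega : n ≤ M i j * 2)
              have h2 : M i j * 2 - n = n := by omega
              rw [h, h2]
            have hpeel : ψ (alternatingWord j i n) = ψ (alternatingWord i j (n-1)) * cs.simple i := by
              have : alternatingWord j i n = (alternatingWord i j (n-1)).concat i := by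
                have hn' : n = (n-1) + 1 := by omega
                rw [hn', alternatingWord_succ]
                simp
              rw [this, wordProd_concat]
            have hws : w * cs.simple i = u * ψ (alternatingWord i j (n-1)) := by
              rw [hwu, hform, hbraid, hpeel, ← mul_assoc u, cs.simple_mul_simple_cancel_right]
            have hbound := hlb (n-1)
            rw [hws] at hlen
            omega
        · -- ends in i : contradiction
          exfalso
          have hpeel : ψ (alternatingWord j i n) = ψ (alternatingWord i j (n-1)) * cs.simple i := by
            have : alternatingWord j i n = (alternatingWord i j (n-1)).concat i := by
              have hn' : n = (n-1) + 1 := by omega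
              rw [hn', alternatingWord_succ]
              simp
            rw [this, wordProd_concat]
          have hws : w * cs.simple i = u * ψ (alternatingWord i j (n-1)) := by
            rw [hwu, hform, hpeel, ← mul_assoc u, cs.simple_mul_simple_cancel_right]
          have hbound := hlb (n-1)
          rw [hws] at hlen
          omega

lemma neg_combo {A C : B → ℝ} (hA : NegV A) (hC : NegV C) {f g : ℝ}
    (hf : 0 < f) (hg : 0 ≤ g) :
    NegV (f • A + g • C) := by
  constructor
  · intro q
    have := hA.1 q
    have := hC.1 q
    simp only [Pi.add_apply, Pi.smul_apply, smul_eq_mul]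
    nlinarith
  · obtain ⟨q, hq⟩ := hA.exists_neg
    intro hc
    have := congrFun hc q
    simp only [Pi.add_apply, Pi.smul_apply, smul_eq_mul, Pi.zero_apply] at this
    nlinarith [hC.1 q]

lemma neg_of_pos_neg {v : B → ℝ} (h : PosV v) : NegV (-v) := by
  refine ⟨fun q => by simpa using h.1 q, ?_⟩
  intro hc
  exact h.2 (by simpa using congrArg (fun z => -z) hc)

/-- descent gives negativity -/
lemma neg_of_descent (hΦ : ∀ k : B, Φ (cs.simple k) = sig M k)
    (hM2 : ∀ p q : B, p ≠ q → 2 ≤ M p q) (z : W) (i : B)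
    (hz : ℒ (z * cs.simple i) + 1 = ℒ z) :
    NegV (Φ z (av i)) := by
  have h1 : ℒ ((z * cs.simple i) * cs.simple i) = ℒ (z * cs.simple i) + 1 := by
    rw [cs.simple_mul_simple_cancel_right]; omega
  have hp := posMain cs Φ hΦ hM2 (ℒ (z * cs.simple i)) (z * cs.simple i) i le_rfl h1
  have hz2 : Φ z (av i) = - (Φ (z * cs.simple i) (av i)) := by
    conv_lhs => rw [← cs.simple_mul_simple_cancel_right (w := z) (i := i)]
    rw [map_mul, Module.End.mul_apply, hΦ, sig_av_self, map_neg]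
  rw [hz2]
  exact neg_of_pos_neg hp

/-- dichotomy -/
lemma pos_or_neg (hΦ : ∀ k : B, Φ (cs.simple k) = sig M k)
    (hM2 : ∀ p q : B, p ≠ q → 2 ≤ M p q) (z : W) (i : B) :
    PosV (Φ z (av i)) ∨ NegV (Φ z (av i)) := by
  rcases cs.length_mul_simple z i with h | h
  · exact Or.inl (posMain cs Φ hΦ hM2 (ℒ z) z i le_rfl h)
  · exact Or.inr (neg_of_descent cs Φ hΦ hM2 z i h)

/-- invariance of the form -/
lemma Bl_Phi (hΦ : ∀ k : B, Φ (cs.simple k) = sig M k) (w : W) :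
    ∀ u v : B → ℝ, Bl M (Φ w u) (Φ w v) = Bl M u v := by
  refine cs.simple_induction_left
    (p := fun w => ∀ u v : B → ℝ, Bl M (Φ w u) (Φ w v) = Bl M u v) w ?_ ?_
  · intro u v; simp
  · intro w' k hprev u v
    rw [map_mul, Module.End.mul_apply, Module.End.mul_apply, hΦ, Bl_sig_invariant]
    exact hprev u v

lemma Phi_inv_cancel (w : W) (v : B → ℝ) : Φ w⁻¹ (Φ w v) = v := by
  rw [← Module.End.mul_apply, ← map_mul, inv_mul_cancel, map_one, Module.End.one_apply]

lemma Phi_cancel_inv (w : W) (v : B → ℝ) : Φ w (Φ w⁻¹ v) = v := by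
  rw [← Module.End.mul_apply, ← map_mul, mul_inv_cancel, map_one, Module.End.one_apply]

/-- reflection formula -/
lemma Phi_refl (hΦ : ∀ k : B, Φ (cs.simple k) = sig M k) (v' : W) (k : B) (u : B → ℝ) :
    Φ (v' * cs.simple k * v'⁻¹) u =
      u - (2 * Bl M (Φ v' (av k)) u) • Φ v' (av k) := by
  have hbf : bf M k (Φ v'⁻¹ u) = Bl M (Φ v' (av k)) u := by
    rw [← Bl_av_left, ← Bl_Phi cs Φ hΦ v' (av k) (Φ v'⁻¹ u), Phi_cancel_inv]
  rw [map_mul, map_mul, Module.End.mul_apply, Module.End.mul_apply, hΦ, sig_apply,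
    map_sub, map_smul, Phi_cancel_inv, hbf]

/-- discrete intermediate value -/
lemma ivt {P : ℕ → Prop} : ∀ n : ℕ, ¬ P 0 → P n → ∃ j, j < n ∧ ¬ P j ∧ P (j+1) := by
  intro n
  induction n with
  | zero => intro h0 hn; exact absurd hn h0
  | succ n ih =>
      intro h0 hn
      by_cases h : P n
      · obtain ⟨j, h1, h2, h3⟩ := ih h0 h
        exact ⟨j, by omega, h2, h3⟩
      · exact ⟨n, by omega, h, hn⟩

/-- a positive vector sent negative by a generator is on the ray of that generator -/
lemma flip_ray {u : B → ℝ} {x : B} (hu : PosV u) (hneg : NegV (sig M x u)) :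
    ∃ lam : ℝ, 0 < lam ∧ u = lam • av x := by
  have hcoord : ∀ q, q ≠ x → u q = 0 := by
    intro q hq
    have h1 : (sig M x u) q = u q := by
      rw [sig_apply]
      simp [av_apply_ne hq]
    have := hneg.1 q
    rw [h1] at this
    exact le_antisymm this (hu.1 q)
  have hux : u = u x • av x := by
    funext q
    by_cases hq : q = x
    · subst hq; simp [av]
    · simp [av, hq, hcoord q hq]
  refine ⟨u x, ?_, hux⟩
  rcases lt_or_eq_of_le (hu.1 x) with h | h
  · exact h
  · exfalso
    apply hu.2
    rw [hux, ← h, zero_smul]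

end Cox

/-- growth sequences -/
def xyseq (γ : ℝ) : ℕ → ℝ × ℝ
  | 0 => (1, 0)
  | k+1 => ((4*γ^2-1)*(xyseq γ k).1 - 2*γ*(xyseq γ k).2,
            2*γ*(xyseq γ k).1 - (xyseq γ k).2)

lemma xyseq_facts {γ : ℝ} (hγ : 1 < γ) :
    ∀ k, 1 ≤ (xyseq γ k).1 ∧ 0 ≤ (xyseq γ k).2 ∧ (xyseq γ k).2 < (xyseq γ k).1 ∧
      (xyseq γ k).1 < (xyseq γ (k+1)).1 := by
  intro k
  induction k with
  | zero =>
      refine ⟨le_refl 1, le_refl 0, by norm_num [xyseq], ?_⟩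
      simp only [xyseq]
      nlinarith
  | succ k ih =>
      obtain ⟨h1, h2, h3, h4⟩ := ih
      have e1 : (xyseq γ (k+1)).1 = (4*γ^2-1)*(xyseq γ k).1 - 2*γ*(xyseq γ k).2 := rfl
      have e2 : (xyseq γ (k+1)).2 = 2*γ*(xyseq γ k).1 - (xyseq γ k).2 := rfl
      have e3 : (xyseq γ (k+2)).1 = (4*γ^2-1)*(xyseq γ (k+1)).1 - 2*γ*(xyseq γ (k+1)).2 := rfl
      have g1 : 1 ≤ (xyseq γ (k+1)).1 := by nlinarith
      have g2 : 0 ≤ (xyseq γ (k+1)).2 := by nlinarith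
      have g3 : (xyseq γ (k+1)).2 < (xyseq γ (k+1)).1 := by nlinarith
      refine ⟨g1, g2, g3, ?_⟩
      rw [e3]
      have hpos : 0 < 4*γ^2 - 2*γ - 2 := by nlinarith
      have key : 2*γ*(xyseq γ (k+1)).2 ≤ 2*γ*(xyseq γ (k+1)).1 := by nlinarith
      nlinarith [mul_le_mul_of_nonneg_left g1 (le_of_lt hpos)]

lemma xyseq_strictMono {γ : ℝ} (hγ : 1 < γ) :
    StrictMono (fun k => (xyseq γ k).1) :=
  strictMono_nat_of_lt_succ (fun k => (xyseq_facts hγ k).2.2.2)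

end Stmt16

set_option maxHeartbeats 1000000 in
open Stmt16 in
/-- no w can be written both as w₁·st and w₂·sr with lengths adding. -/
theorem stmt16 {B : Type*} {W : Type*} [Group W] {M : CoxeterMatrix B}
    (cs : CoxeterSystem M W) (r s t : B)
    (hrs : r ≠ s) (hrt : r ≠ t) (hst : s ≠ t)
    (hB : ∀ i : B, i = r ∨ i = s ∨ i = t)
    (mrt : M r t = 2) (mst : M s t = 3) (msr : 8 ≤ M s r)
     :
    ¬ ∃ w w₁ w₂ : W, w = w₁ * cs.simple s * cs.simple t ∧ cs.length w = cs.length w₁ + 2 ∧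
      w = w₂ * cs.simple s * cs.simple r ∧ cs.length w = cs.length w₂ + 2 := by
  letI : DecidableEq B := Classical.decEq B
  letI : Fintype B := Fintype.ofSurjective (fun k : Fin 3 => ![r, s, t] k) (by
    intro b
    rcases hB b with h | h | h
    exacts [⟨0, h.symm⟩, ⟨1, h.symm⟩, ⟨2, h.symm⟩])
  rintro ⟨w, w₁, w₂, h1, h2, h3, h4⟩
  have mtr : M t r = 2 := by rw [M.symmetric]; exact mrt
  have mts : M t s = 3 := by rw [M.symmetric]; exact mst
  have mrs : 8 ≤ M r s := by rw [M.symmetric]; exact msr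
  have hM2 : ∀ p q : B, p ≠ q → 2 ≤ M p q := by
    intro p q hpq
    rcases hB p with hp | hp | hp <;> rcases hB q with hq | hq | hq <;> subst hp <;> subst hq <;>
      first
      | exact absurd rfl hpq
      | omega
  have hlift : CoxeterMatrix.IsLiftable M (fun k => sig M k) := by
    intro p q
    by_cases hpq : p = q
    · subst hpq
      rw [M.diagonal, pow_one]
      exact sig_sq M p
    · have h2' := hM2 p q hpq
      rcases hB p with hp | hp | hp <;> rcases hB q with hq | hq | hq <;>
        rw [hp, hq] at hpq h2' ⊢
      · exact absurd rfl hpq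
      · exact pair_pow_eq_one M r s t hpq (Ne.symm hrt) (Ne.symm hst) h2' hB
      · exact pair_pow_eq_one M r t s hpq (Ne.symm hrs) hst h2'
          (fun k => by rcases hB k with h | h | h <;> tauto)
      · exact pair_pow_eq_one M s r t hpq (Ne.symm hst) (Ne.symm hrt) h2'
          (fun k => by rcases hB k with h | h | h <;> tauto)
      · exact absurd rfl hpq
      · exact pair_pow_eq_one M s t r hpq hrs hrt h2'
          (fun k => by rcases hB k with h | h | h <;> tauto)
      · exact pair_pow_eq_one M t r s hpq hst (Ne.symm hrs) h2'
          (fun k => by rcases hB k with h | h | h <;> tauto)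
      · exact pair_pow_eq_one M t s r hpq hrt hrs h2'
          (fun k => by rcases hB k with h | h | h <;> tauto)
      · exact absurd rfl hpq
  obtain ⟨Φ, hΦ⟩ : ∃ Φ : W →* Module.End ℝ (B → ℝ), ∀ k : B, Φ (cs.simple k) = sig M k :=
    ⟨cs.lift ⟨fun k => sig M k, hlift⟩, fun k => cs.lift_apply_simple hlift k⟩
  -- length facts
  have l1 : cs.length (w₁ * cs.simple s) = cs.length w₁ + 1 := by
    rcases cs.length_mul_simple w₁ s with h | h
    · exact h
    · exfalso
      have hle : cs.length w ≤ cs.length (w₁ * cs.simple s) + 1 := by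
        rw [h1]
        rcases cs.length_mul_simple (w₁ * cs.simple s) t with h' | h' <;> omega
      omega
  have l2 : cs.length (w₂ * cs.simple s) = cs.length w₂ + 1 := by
    rcases cs.length_mul_simple w₂ s with h | h
    · exact h
    · exfalso
      have hle : cs.length w ≤ cs.length (w₂ * cs.simple s) + 1 := by
        rw [h3]
        rcases cs.length_mul_simple (w₂ * cs.simple s) r with h' | h' <;> omega
      omega
  have hz1 : w * cs.simple t = w₁ * cs.simple s := by
    rw [h1, cs.simple_mul_simple_cancel_right]
  have hz2 : w * cs.simple r = w₂ * cs.simple s := by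
    rw [h3, cs.simple_mul_simple_cancel_right]
  have hneg1 : NegV (Φ (w * cs.simple t) (av s)) := by
    rw [hz1]
    apply neg_of_descent cs Φ hΦ hM2
    rw [cs.simple_mul_simple_cancel_right]
    omega
  have hneg2 : NegV (Φ (w * cs.simple r) (av s)) := by
    rw [hz2]
    apply neg_of_descent cs Φ hΦ hM2
    rw [cs.simple_mul_simple_cancel_right]
    omega
  -- constants
  set c : ℝ := Real.cos (thv (M s r)) with hc
  have hcbig : Real.sqrt 3 / 2 < c := by
    have hm8 : (8:ℝ) ≤ M s r := by exact_mod_cast msr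
    have h6 : thv (M s r) < Real.pi / 6 := by
      rw [thv, div_lt_div_iff₀ (by linarith) (by norm_num)]
      nlinarith [Real.pi_pos]
    have hmono := Real.cos_lt_cos_of_nonneg_of_le_pi
      (le_of_lt (thv_pos (by omega : 1 ≤ M s r)))
      (by linarith [Real.pi_pos] : Real.pi / 6 ≤ Real.pi) h6
    calc Real.sqrt 3 / 2 = Real.cos (Real.pi / 6) := (Real.cos_pi_div_six).symm
      _ < c := by rw [hc]; exact hmono
  have hsq3 : Real.sqrt 3 ^ 2 = 3 := Real.sq_sqrt (by norm_num)
  have hsq3' : (1:ℝ) < Real.sqrt 3 := by nlinarith [Real.sqrt_nonneg 3]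
  have hc0 : 0 < c := by nlinarith
  set γ : ℝ := 2*c^2 - 1/2 with hγdef
  have hγ : 1 < γ := by rw [hγdef]; nlinarith
  -- roots
  set β₁ : B → ℝ := av s + av t with hβ₁
  set β₂ : B → ℝ := av s + (2*c) • av r with hβ₂
  have hCts : Cf M t s = -(1/2) := by
    rw [Cf, mts]
    norm_num [Real.cos_pi_div_three]
  have hCst : Cf M s t = -(1/2) := by rw [Cf_symm]; exact hCts
  have hCtr : Cf M t r = 0 := by
    rw [Cf, mtr]
    norm_num [Real.cos_pi_div_two]
  have hCrs : Cf M r s = -c := by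
    rw [hc]
    simp only [Cf, thv, M.symmetric r s]
  have hCsr : Cf M s r = -c := by rw [Cf_symm]; exact hCrs
  have hb1 : Φ (cs.simple t) (av s) = β₁ := by
    rw [hΦ, sig_av, hCts, hβ₁]
    module
  have hb2 : Φ (cs.simple r) (av s) = β₂ := by
    rw [hΦ, sig_av, hCrs, hβ₂]
    module
  have hBav : ∀ p q : B, Bl M (av p) (av q) = Cf M p q := fun p q => by
    rw [Bl_av_left, bf_av]
  have hB12 : Bl M β₁ β₂ = -γ := by
    rw [hβ₁, hβ₂]
    simp only [Bl_add_left, Bl_add_right, Bl_smul_right, hBav]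
    rw [Cf_diag, hCsr, hCts, hCtr, hγdef]
    ring
  have hB11 : Bl M β₁ β₁ = 1 := by
    rw [hβ₁]
    simp only [Bl_add_left, Bl_add_right, hBav]
    rw [Cf_diag, Cf_diag, hCst, hCts]
    ring
  have hB22 : Bl M β₂ β₂ = 1 := by
    rw [hβ₂]
    simp only [Bl_add_left, Bl_add_right, Bl_smul_left, Bl_smul_right, hBav]
    rw [Cf_diag, Cf_diag, hCsr, hCrs]
    ring
  have hB21 : Bl M β₂ β₁ = -γ := by rw [Bl_symm]; exact hB12
  -- reflections
  set q₁ : W := cs.simple t * cs.simple s * cs.simple t with hq₁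
  set q₂ : W := cs.simple r * cs.simple s * cs.simple r with hq₂
  have hr1 : ∀ u, Φ q₁ u = u - (2 * Bl M β₁ u) • β₁ := by
    intro u
    have h := Phi_refl cs Φ hΦ (cs.simple t) s u
    rw [cs.inv_simple, hb1] at h
    exact h
  have hr2 : ∀ u, Φ q₂ u = u - (2 * Bl M β₂ u) • β₂ := by
    intro u
    have h := Phi_refl cs Φ hΦ (cs.simple r) s u
    rw [cs.inv_simple, hb2] at h
    exact h
  set g : W := q₁ * q₂ with hgdef
  have hgb1 : Φ g β₁ = (4*γ^2-1) • β₁ + (2*γ) • β₂ := by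
    rw [hgdef, map_mul, Module.End.mul_apply, hr2 β₁, hB21, map_sub, map_smul,
      hr1 β₁, hr1 β₂, hB11, hB12]
    module
  have hgb2 : Φ g β₂ = (-(2*γ)) • β₁ + (-1:ℝ) • β₂ := by
    rw [hgdef, map_mul, Module.End.mul_apply, hr2 β₂, hB22, map_sub, map_smul,
      hr1 β₂, hB12]
    module
  have hporb : ∀ k : ℕ, Φ (g^k) β₁ = (xyseq γ k).1 • β₁ + (xyseq γ k).2 • β₂ := by
    intro k
    induction k with
    | zero => simp [xyseq]
    | succ k ih =>
        rw [pow_succ', map_mul, Module.End.mul_apply, ih, map_add, map_smul, map_smul,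
          hgb1, hgb2]
        have e1 : (xyseq γ (k+1)).1 = (4*γ^2-1)*(xyseq γ k).1 - 2*γ*(xyseq γ k).2 := rfl
        have e2 : (xyseq γ (k+1)).2 = 2*γ*(xyseq γ k).1 - (xyseq γ k).2 := rfl
        rw [e1, e2]
        module
  have hxy := xyseq_facts hγ
  have hposb1 : PosV β₁ := by
    constructor
    · intro q
      rw [hβ₁]
      simp only [Pi.add_apply, av]
      by_cases hq : q = s <;> by_cases hq' : q = t <;>
        simp [hq, hq', hst, Ne.symm hst] <;> norm_num
    · intro hzero
      have h := congrFun hzero t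
      rw [hβ₁] at h
      simp [av, Ne.symm hst] at h
  have hposb2 : PosV β₂ := by
    constructor
    · intro q
      rw [hβ₂]
      simp only [Pi.add_apply, Pi.smul_apply, smul_eq_mul, av]
      by_cases hq : q = s <;> by_cases hq' : q = r <;>
        simp [hq, hq', hrs, Ne.symm hrs] <;> positivity
    · intro hzero
      have h := congrFun hzero s
      rw [hβ₂] at h
      simp [av, Ne.symm hrs] at h
  have hpPos : ∀ k, PosV (Φ (g^k) β₁) := by
    intro k
    rw [hporb k]
    exact pos_combo hposb1 hposb2 (by linarith [(hxy k).1]) (hxy k).2.1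
      (Or.inl (by linarith [(hxy k).1]))
  have hpNeg : ∀ k, NegV (Φ w (Φ (g^k) β₁)) := by
    intro k
    rw [hporb k, map_add, map_smul, map_smul]
    have hwb1 : Φ w β₁ = Φ (w * cs.simple t) (av s) := by
      rw [map_mul, Module.End.mul_apply, hb1]
    have hwb2 : Φ w β₂ = Φ (w * cs.simple r) (av s) := by
      rw [map_mul, Module.End.mul_apply, hb2]
    rw [hwb1, hwb2]
    exact neg_combo hneg1 hneg2 (by linarith [(hxy k).1]) (hxy k).2.1
  have hcoord : ∀ k, (Φ (g^k) β₁) t = (xyseq γ k).1 := by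
    intro k
    rw [hporb k]
    simp only [Pi.add_apply, Pi.smul_apply, smul_eq_mul]
    rw [hβ₁, hβ₂]
    simp [av, Ne.symm hst, Ne.symm hrt]
  have hBpp : ∀ k, Bl M (Φ (g^k) β₁) (Φ (g^k) β₁) = 1 := fun k => by
    rw [Bl_Phi cs Φ hΦ (g^k), hB11]
  have hcomp : ∀ (z : W) (k : ℕ), Φ z (Φ (g^k) β₁) = Φ (z * (g^k * cs.simple t)) (av s) := by
    intro z k
    rw [map_mul, map_mul, Module.End.mul_apply, Module.End.mul_apply, hb1]
  obtain ⟨ω, hωlen, hωw⟩ := cs.exists_reduced_word w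
  have hflip : ∀ k : ℕ, ∃ j, j < ω.length ∧ ∃ lam : ℝ, 0 < lam ∧
      Φ (cs.wordProd (ω.drop (j+1))) (Φ (g^k) β₁) = lam • av (ω.getD j r) := by
    intro k
    have hQn : PosV (Φ (cs.wordProd (ω.drop ω.length)) (Φ (g^k) β₁)) := by
      rw [List.drop_length]
      simpa using hpPos k
    have hQ0 : ¬ PosV (Φ (cs.wordProd (ω.drop 0)) (Φ (g^k) β₁)) := by
      rw [List.drop_zero, ← hωw]
      intro hP
      exact not_pos_and_neg hP (hpNeg k)
    obtain ⟨j, hjlt, hPj, hPj1⟩ :=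
      ivt (P := fun m => PosV (Φ (cs.wordProd (ω.drop m)) (Φ (g^k) β₁))) ω.length hQ0 hQn
    have hNj : NegV (Φ (cs.wordProd (ω.drop j)) (Φ (g^k) β₁)) := by
      have hd := pos_or_neg cs Φ hΦ hM2 (cs.wordProd (ω.drop j) * (g^k * cs.simple t)) s
      rw [← hcomp] at hd
      tauto
    have hdrop : ω.drop j = ω.getD j r :: ω.drop (j+1) := by
      rw [List.getD_eq_getElem _ _ hjlt]
      exact List.drop_eq_getElem_cons hjlt
    have hsigd : Φ (cs.wordProd (ω.drop j)) (Φ (g^k) β₁) =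
        sig M (ω.getD j r) (Φ (cs.wordProd (ω.drop (j+1))) (Φ (g^k) β₁)) := by
      rw [hdrop, cs.wordProd_cons, map_mul, Module.End.mul_apply, hΦ]
    rw [hsigd] at hNj
    obtain ⟨lam, hlam, hray⟩ := flip_ray hPj1 hNj
    exact ⟨j, hjlt, lam, hlam, hray⟩
  choose J hJlt lam hlam hray using hflip
  have hcard : (Finset.range ω.length).card < (Finset.range (ω.length + 1)).card := by simp
  obtain ⟨k, hk, k', hk', hkk', hJeq⟩ :=
    Finset.exists_ne_map_eq_of_card_lt_of_maps_to hcard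
      (fun a _ => Finset.mem_range.mpr (hJlt a))
  have hlamone : ∀ m : ℕ, lam m = 1 := by
    intro m
    have hBm := hBpp m
    rw [← Bl_Phi cs Φ hΦ (cs.wordProd (ω.drop (J m + 1))) (Φ (g^m) β₁) (Φ (g^m) β₁),
      hray m, Bl_smul_left, Bl_smul_right, Bl_av_left, bf_av, Cf_diag] at hBm
    nlinarith [hlam m]
  have e1 := hray k
  have e2 := hray k'
  rw [hlamone k, one_smul, hJeq] at e1
  rw [hlamone k', one_smul] at e2
  have heq : Φ (g^k) β₁ = Φ (g^(k')) β₁ := by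
    have hXeq : Φ (cs.wordProd (ω.drop (J k' + 1))) (Φ (g^k) β₁) =
        Φ (cs.wordProd (ω.drop (J k' + 1))) (Φ (g^(k')) β₁) := by rw [e1, e2]
    calc Φ (g^k) β₁
        = Φ (cs.wordProd (ω.drop (J k' + 1)))⁻¹
            (Φ (cs.wordProd (ω.drop (J k' + 1))) (Φ (g^k) β₁)) :=
          (Phi_inv_cancel Φ _ _).symm
      _ = Φ (cs.wordProd (ω.drop (J k' + 1)))⁻¹
            (Φ (cs.wordProd (ω.drop (J k' + 1))) (Φ (g^(k')) β₁)) := by rw [hXeq]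
      _ = Φ (g^(k')) β₁ := Phi_inv_cancel Φ _ _
  have hxeq : (xyseq γ k).1 = (xyseq γ k').1 := by
    rw [← hcoord k, ← hcoord k', heq]
  exact hkk' ((xyseq_strictMono hγ).injective hxeq)
end
end
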